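/- arXiv:2605.31184 — 5 statements merged into one kernel-verified Lean document; each statement's English description precedes it below -/
import Mathlib

section
/- Let μ be a probability measure on a measurable space 𝒳 and let m : 𝒳 → [−1, 1] be measurable and satisfy the margin condition with exponent γ > 0 and constant c* ≥ 0. Then, with C = max(c*, 1)·2^{1+γ}/(1+γ), for every v ≥ 0 one has ∫_{{x : m(x) ≠ 0}} max(2v − |m(x)|, 0) μ(dx) ≤ C·v^{1+γ}. -/
open MeasureTheory Set

/-- If `m : 𝒳 → [-1,1]` satisfies the margin condition with exponent `γ > 0`
and constant `c* ≥ 0`, then with `C = max(c*,1)·2^{1+γ}/(1+γ)`, for every `v ≥ 0`,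
`∫_{m ≠ 0} max(2v − |m(x)|, 0) μ(dx) ≤ C v^{1+γ}`. -/
theorem margin_condition_integral_bound
    {𝒳 : Type*} [MeasurableSpace 𝒳] (μ : Measure 𝒳) [IsProbabilityMeasure μ]
    (m : 𝒳 → ℝ) (hm_meas : Measurable m) (hm_bound : ∀ x, |m x| ≤ 1)
    (γ cstar : ℝ) (hγ : 0 < γ) (hcstar : 0 ≤ cstar)
    (hmargin : ∀ t : ℝ, 0 < t → t ≤ 1 →
      (μ {x | 0 < |m x| ∧ |m x| ≤ t}).toReal ≤ cstar * t ^ γ) :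
    ∀ v : ℝ, 0 ≤ v →
      ∫ x in {x | m x ≠ 0}, max (2 * v - |m x|) 0 ∂μ
        ≤ (max cstar 1 * 2 ^ (1 + γ) / (1 + γ)) * v ^ (1 + γ) := by
  intro v hv
  set M : ℝ := max cstar 1 with hM
  have hM0 : (0:ℝ) ≤ M := le_trans zero_le_one (le_max_right _ _)
  set S : Set 𝒳 := {x | m x ≠ 0} with hS
  set f : 𝒳 → ℝ := fun x => max (2 * v - |m x|) 0 with hf
  set ν : Measure 𝒳 := μ.restrict S with hν
  have hSmeas : MeasurableSet S := (hm_meas (measurableSet_singleton 0)).compl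
  have hfmeas : Measurable f := ((measurable_const.sub hm_meas.abs).max measurable_const)
  have hfnn : ∀ x, 0 ≤ f x := fun x => le_max_right _ _
  have hfle : ∀ x, f x ≤ 2 * v := fun x => by
    simp only [hf, max_le_iff]
    constructor
    · linarith [abs_nonneg (m x)]
    · linarith
  -- layer cake
  have hkey : ∫⁻ x, ENNReal.ofReal (f x) ∂ν = ∫⁻ t in Ioi (0:ℝ), ν {a | t < f a} := by
    exact lintegral_eq_lintegral_meas_lt ν (Filter.Eventually.of_forall hfnn)
      hfmeas.aemeasurable
  have hγ1 : (0:ℝ) < 1 + γ := by linarith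
  -- the real comparison integral
  have hIcont : ContinuousOn (fun t : ℝ => M * (2 * v - t) ^ γ) (Icc 0 (2*v)) := by
    apply ContinuousOn.mul continuousOn_const
    apply ContinuousOn.rpow_const (by fun_prop)
    intro t _
    right; exact hγ.le
  have hIint : IntegrableOn (fun t : ℝ => M * (2 * v - t) ^ γ) (Ioc 0 (2*v)) := by
    exact (hIcont.integrableOn_compact isCompact_Icc).mono_set Ioc_subset_Icc_self
  have hInn : ∀ t ∈ Ioc (0:ℝ) (2*v), 0 ≤ M * (2 * v - t) ^ γ := by
    intro t ht
    exact mul_nonneg hM0 (Real.rpow_nonneg (by linarith [ht.2]) γ)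
  -- pointwise measure bound
  have hbound : ∀ t ∈ Ioi (0:ℝ),
      ν {a | t < f a} ≤ ENNReal.ofReal ((Ioc (0:ℝ) (2*v)).indicator
        (fun t => M * (2 * v - t) ^ γ) t) := by
    intro t ht
    simp only [mem_Ioi] at ht
    by_cases h2v : 2 * v ≤ t
    · have : {a | t < f a} = ∅ := by
        ext a; simp only [mem_setOf_eq, mem_empty_iff_false, iff_false, not_lt]
        exact le_trans (hfle a) h2v
      rw [this]
      simp
    · push_neg at h2v
      have htmem : t ∈ Ioc (0:ℝ) (2*v) := ⟨ht, h2v.le⟩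
      rw [indicator_of_mem htmem]
      set s : ℝ := min (2 * v - t) 1 with hs
      have hs0 : 0 < s := lt_min (by linarith) one_pos
      have hs1 : s ≤ 1 := min_le_right _ _
      have hsub : {a | t < f a} ∩ S ⊆ {x | 0 < |m x| ∧ |m x| ≤ s} := by
        intro x hx
        obtain ⟨hx1, hx2⟩ := hx
        simp only [mem_setOf_eq] at hx1 hx2 ⊢
        have habs : 0 < |m x| := abs_pos.mpr hx2
        refine ⟨habs, le_min ?_ (hm_bound x)⟩
        have : t < 2 * v - |m x| := by
          rcases max_cases (2 * v - |m x|) 0 with ⟨he, _⟩ | ⟨he, hle⟩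
          · rw [hf] at hx1; simp only at hx1; rw [he] at hx1; exact hx1
          · rw [hf] at hx1; simp only at hx1; rw [he] at hx1; linarith
        linarith
      have hmset : MeasurableSet {a | t < f a} := measurableSet_lt measurable_const hfmeas
      rw [hν, Measure.restrict_apply hmset]
      refine le_trans (measure_mono hsub) ?_
      rw [ENNReal.le_ofReal_iff_toReal_le (measure_ne_top μ _)
        (mul_nonneg hM0 (Real.rpow_nonneg (by linarith) γ))]
      refine le_trans (hmargin s hs0 hs1) ?_
      have h1 : s ^ γ ≤ (2 * v - t) ^ γ :=
        Real.rpow_le_rpow hs0.le (min_le_left _ _) hγ.le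
      exact mul_le_mul (le_max_left _ _) h1 (Real.rpow_nonneg hs0.le γ) hM0
  -- chain of inequalities in ℝ≥0∞
  have hchain : ∫⁻ t in Ioi (0:ℝ), ν {a | t < f a}
      ≤ ENNReal.ofReal (∫ t in Ioc (0:ℝ) (2*v), M * (2 * v - t) ^ γ) := by
    calc ∫⁻ t in Ioi (0:ℝ), ν {a | t < f a}
        ≤ ∫⁻ t in Ioi (0:ℝ), ENNReal.ofReal ((Ioc (0:ℝ) (2*v)).indicator
            (fun t => M * (2 * v - t) ^ γ) t) :=
          setLIntegral_mono' measurableSet_Ioi hbound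
      _ = ∫⁻ t in Ioi (0:ℝ), (Ioc (0:ℝ) (2*v)).indicator
            (fun t => ENNReal.ofReal (M * (2 * v - t) ^ γ)) t := by
          apply lintegral_congr
          intro t
          by_cases h : t ∈ Ioc (0:ℝ) (2*v) <;> simp [indicator_apply, h]
      _ = ∫⁻ t in Ioc (0:ℝ) (2*v), ENNReal.ofReal (M * (2 * v - t) ^ γ) := by
          rw [lintegral_indicator measurableSet_Ioc,
            Measure.restrict_restrict measurableSet_Ioc,
            inter_eq_self_of_subset_left Ioc_subset_Ioi_self]
      _ = ENNReal.ofReal (∫ t in Ioc (0:ℝ) (2*v), M * (2 * v - t) ^ γ) := by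
          rw [← ofReal_integral_eq_lintegral_ofReal hIint
            ((ae_restrict_iff' measurableSet_Ioc).2 (Filter.Eventually.of_forall hInn))]
  -- compute the comparison integral
  have hcomp : ∫ t in Ioc (0:ℝ) (2*v), M * (2 * v - t) ^ γ
      = M * 2 ^ (1 + γ) / (1 + γ) * v ^ (1 + γ) := by
    rw [← intervalIntegral.integral_of_le (by linarith : (0:ℝ) ≤ 2*v)]
    rw [intervalIntegral.integral_const_mul]
    have := intervalIntegral.integral_comp_sub_left (a := (0:ℝ)) (b := 2*v)
      (fun x => x ^ γ) (2*v)
    simp only [sub_self, sub_zero] at this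
    rw [this, integral_rpow (Or.inl (by linarith : (-1:ℝ) < γ))]
    rw [Real.zero_rpow (by linarith : γ + 1 ≠ 0), sub_zero]
    rw [Real.mul_rpow (by norm_num) hv]
    ring_nf
  -- assemble
  have hlhs : ∫ x in S, f x ∂μ = (∫⁻ x, ENNReal.ofReal (f x) ∂ν).toReal := by
    rw [integral_eq_lintegral_of_nonneg_ae (Filter.Eventually.of_forall hfnn)
      hfmeas.aestronglyMeasurable]
  calc ∫ x in S, f x ∂μ
      = (∫⁻ x, ENNReal.ofReal (f x) ∂ν).toReal := hlhs
    _ ≤ (ENNReal.ofReal (∫ t in Ioc (0:ℝ) (2*v), M * (2 * v - t) ^ γ)).toReal := by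
        apply ENNReal.toReal_mono ENNReal.ofReal_ne_top
        rw [hkey]; exact hchain
    _ ≤ M * 2 ^ (1 + γ) / (1 + γ) * v ^ (1 + γ) := by
        rw [hcomp]
        rw [ENNReal.toReal_ofReal']
        exact max_le le_rfl (by positivity)
end

section
/- Assume that H_x is continuous on [0,∞) for every x ∈ 𝒳, that m satisfies the generalized Lipschitz condition with a function h such that h^{1+γ} is concave on [0,1], and that m satisfies the margin condition with exponent γ > 0 and constant c* ≥ 0. Let g_NN(x) = sign m(X'_{k,1}(x)), where X'_{k,1}(x) denotes the nearest prototype to x among X'_1, …, X'_k (ties broken in favour of the smaller index). Then there exists a constant C > 0, depending only on c* and γ, such that for every k ≥ 1, E[L(g_NN)] − L* ≤ C·h(1/k)^{1+γ}. -/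
open MeasureTheory Set Filter

noncomputable def sgn (u : ℝ) : ℝ := if 0 ≤ u then 1 else -1

/-- Index of the nearest point among `p 0, …, p (k-1)` to `x`, ties broken in favour of the
smaller index. -/
noncomputable def nearestIdx {𝒳 : Type*} [MetricSpace 𝒳] {k : ℕ} (hk : 0 < k)
    (p : Fin k → 𝒳) (x : 𝒳) : Fin k :=
  (Finset.univ.filter fun j => ∀ i, dist x (p j) ≤ dist x (p i)).min'
    (by
      obtain ⟨j, -, hj⟩ := Finset.exists_min_image Finset.univ (fun j => dist x (p j))
        (Finset.univ_nonempty_iff.mpr (Fin.pos_iff_nonempty.mp hk))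
      exact ⟨j, Finset.mem_filter.mpr ⟨Finset.mem_univ _, fun i => hj i (Finset.mem_univ i)⟩⟩)

open scoped ENNReal NNReal


lemma sgn_vals (u : ℝ) : sgn u = 1 ∨ sgn u = -1 := by
  unfold sgn; split <;> simp

lemma sgn_eq_one (u : ℝ) (hu : 0 ≤ u) : sgn u = 1 := if_pos hu
lemma sgn_eq_neg_one (u : ℝ) (hu : u < 0) : sgn u = -1 := if_neg (not_le.2 hu)

lemma measurable_sgn : Measurable sgn := by
  unfold sgn
  exact Measurable.ite measurableSet_Ici measurable_const measurable_const

lemma nearestIdx_le {𝒳 : Type*} [MetricSpace 𝒳] {k : ℕ} (hk : 0 < k)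
    (p : Fin k → 𝒳) (x : 𝒳) (i : Fin k) :
    dist x (p (nearestIdx hk p x)) ≤ dist x (p i) := by
  have hne : (Finset.univ.filter fun j => ∀ i, dist x (p j) ≤ dist x (p i)).Nonempty := by
    obtain ⟨j, -, hj⟩ := Finset.exists_min_image Finset.univ (fun j => dist x (p j))
      (Finset.univ_nonempty_iff.mpr (Fin.pos_iff_nonempty.mp hk))
    exact ⟨j, Finset.mem_filter.mpr ⟨Finset.mem_univ _, fun i => hj i (Finset.mem_univ i)⟩⟩
  exact (Finset.mem_filter.mp (Finset.min'_mem _ hne)).2 i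

lemma nearestIdx_eq_iff {𝒳 : Type*} [MetricSpace 𝒳] {k : ℕ} (hk : 0 < k)
    (p : Fin k → 𝒳) (x : 𝒳) (j : Fin k) :
    nearestIdx hk p x = j ↔
      ((∀ i, dist x (p j) ≤ dist x (p i)) ∧
        ∀ i : Fin k, (∀ l, dist x (p i) ≤ dist x (p l)) → j ≤ i) := by
  constructor
  · rintro rfl
    refine ⟨fun i => nearestIdx_le hk p x i, fun i hi => ?_⟩
    exact Finset.min'_le _ _ (Finset.mem_filter.mpr ⟨Finset.mem_univ _, hi⟩)
  · rintro ⟨h1, h2⟩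
    apply le_antisymm
    · exact Finset.min'_le _ _ (Finset.mem_filter.mpr ⟨Finset.mem_univ _, h1⟩)
    · apply Finset.le_min'
      intro y hy
      rw [Finset.mem_filter] at hy
      exact h2 y hy.2

lemma measurable_nearestIdx {Ω 𝒳 : Type*} [MeasurableSpace Ω] [MetricSpace 𝒳]
    [TopologicalSpace.SeparableSpace 𝒳]
    [MeasurableSpace 𝒳] [OpensMeasurableSpace 𝒳] {k : ℕ} (hk : 0 < k)
    (proto : Fin k → Ω → 𝒳) (hp : ∀ j, Measurable (proto j)) :
    Measurable (fun q : Ω × 𝒳 => nearestIdx hk (fun j => proto j q.1) q.2) := by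
  haveI : SecondCountableTopology 𝒳 := UniformSpace.secondCountable_of_separable 𝒳
  apply measurable_to_countable'
  intro j
  have hd : ∀ i l : Fin k, MeasurableSet {q : Ω × 𝒳 |
      dist q.2 (proto i q.1) ≤ dist q.2 (proto l q.1)} := by
    intro i l
    exact measurableSet_le (measurable_snd.dist ((hp i).comp measurable_fst))
      (measurable_snd.dist ((hp l).comp measurable_fst))
  have : (fun q : Ω × 𝒳 => nearestIdx hk (fun j => proto j q.1) q.2) ⁻¹' {j}
      = (⋂ i, {q : Ω × 𝒳 | dist q.2 (proto j q.1) ≤ dist q.2 (proto i q.1)}) ∩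
        ⋂ i : Fin k,
          (⋂ l, {q : Ω × 𝒳 | dist q.2 (proto i q.1) ≤ dist q.2 (proto l q.1)})ᶜ ∪
            {q : Ω × 𝒳 | j ≤ i} := by
    ext q
    simp only [mem_preimage, mem_singleton_iff, nearestIdx_eq_iff, mem_setOf_eq, mem_inter_iff,
      mem_iInter, mem_union, mem_compl_iff]
    constructor
    · rintro ⟨h1, h2⟩
      exact ⟨h1, fun i => by by_cases hc : ∀ l, dist q.2 (proto i q.1) ≤ dist q.2 (proto l q.1)
                             exacts [Or.inr (h2 i hc), Or.inl hc]⟩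
    · rintro ⟨h1, h2⟩
      refine ⟨h1, fun i hi => ?_⟩
      rcases h2 i with hc | hc
      exacts [absurd hi hc, hc]
  rw [this]
  apply MeasurableSet.inter
  · exact MeasurableSet.iInter fun i => hd j i
  · refine MeasurableSet.iInter fun i => MeasurableSet.union
      ((MeasurableSet.iInter fun l => hd i l).compl) ?_
    by_cases hji : j ≤ i
    · have : {q : Ω × 𝒳 | j ≤ i} = univ := by ext q; simp [hji]
      rw [this]; exact MeasurableSet.univ
    · have : {q : Ω × 𝒳 | j ≤ i} = ∅ := by ext q; simp [hji]
      rw [this]; exact MeasurableSet.empty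



section Helpers
variable {α : Type*} [MeasurableSpace α] {ν : Measure α}

lemma integrable_of_bound [IsFiniteMeasure ν] {f : α → ℝ} (hf : AEStronglyMeasurable f ν)
    (c : ℝ) (hb : ∀ᵐ a ∂ν, |f a| ≤ c) : Integrable f ν :=
  ⟨hf, HasFiniteIntegral.of_bounded (C := c) (by simpa [Real.norm_eq_abs] using hb)⟩

lemma meas_eq_of_eq_on_conull {S S' W : Set α} (hW : ν Wᶜ = 0)
    (hSS : S ∩ W = S' ∩ W) : ν S = ν S' := by
  have h1 : ν S = ν (S ∩ W) := by
    apply le_antisymm _ (measure_mono inter_subset_left)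
    calc ν S ≤ ν ((S ∩ W) ∪ Wᶜ) := measure_mono (fun a ha => by
            by_cases haW : a ∈ W
            exacts [Or.inl ⟨ha, haW⟩, Or.inr haW])
      _ ≤ ν (S ∩ W) + ν Wᶜ := measure_union_le _ _
      _ = ν (S ∩ W) := by rw [hW, add_zero]
  have h2 : ν S' = ν (S' ∩ W) := by
    apply le_antisymm _ (measure_mono inter_subset_left)
    calc ν S' ≤ ν ((S' ∩ W) ∪ Wᶜ) := measure_mono (fun a ha => by
            by_cases haW : a ∈ W
            exacts [Or.inl ⟨ha, haW⟩, Or.inr haW])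
      _ ≤ ν (S' ∩ W) + ν Wᶜ := measure_union_le _ _
      _ = ν (S' ∩ W) := by rw [hW, add_zero]
  rw [h1, h2, hSS]

end Helpers

section Reg
variable {𝒳 : Type*} [MeasurableSpace 𝒳]

/-- key: split ∫ p.2 over {p.1 ∈ A} into the two measures. -/
lemma integral_snd_eq (lam : Measure (𝒳 × ℝ)) [IsProbabilityMeasure lam]
    (hW : lam {p : 𝒳 × ℝ | p.2 = 1 ∨ p.2 = -1}ᶜ = 0)
    {A : Set 𝒳} (hA : MeasurableSet A) :
    ∫ p in {q : 𝒳 × ℝ | q.1 ∈ A}, p.2 ∂lam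
      = (lam {p : 𝒳 × ℝ | p.1 ∈ A ∧ p.2 = 1}).toReal
        - (lam {p : 𝒳 × ℝ | p.1 ∈ A ∧ p.2 = -1}).toReal := by
  set W : Set (𝒳 × ℝ) := {p : 𝒳 × ℝ | p.2 = 1 ∨ p.2 = -1}
  set T1 : Set (𝒳 × ℝ) := {p : 𝒳 × ℝ | p.1 ∈ A ∧ p.2 = 1}
  set T2 : Set (𝒳 × ℝ) := {p : 𝒳 × ℝ | p.1 ∈ A ∧ p.2 = -1}
  have hT1 : MeasurableSet T1 :=
    (measurable_fst hA).inter (measurable_snd (measurableSet_singleton 1))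
  have hT2 : MeasurableSet T2 :=
    (measurable_fst hA).inter (measurable_snd (measurableSet_singleton (-1)))
  have hSA : MeasurableSet {q : 𝒳 × ℝ | q.1 ∈ A} := measurable_fst hA
  have hae : ∀ᵐ p ∂lam, p ∈ W := by
    rw [ae_iff]
    exact hW
  have heq : ∀ᵐ p ∂lam, {q : 𝒳 × ℝ | q.1 ∈ A}.indicator (fun p => p.2) p
      = T1.indicator (fun _ => (1:ℝ)) p - T2.indicator (fun _ => (1:ℝ)) p := by
    filter_upwards [hae] with p hp
    rcases hp with hp1 | hp1
    · by_cases hpA : p.1 ∈ A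
      · simp [indicator, T1, T2, hp1, hpA]; norm_num
      · simp [indicator, T1, T2, hpA]
    · by_cases hpA : p.1 ∈ A
      · simp [indicator, T1, T2, hp1, hpA]; norm_num
      · simp [indicator, T1, T2, hpA]
  rw [← integral_indicator hSA, integral_congr_ae heq, integral_sub
    ((integrable_const (1:ℝ)).indicator hT1) ((integrable_const (1:ℝ)).indicator hT2),
    integral_indicator_const _ hT1, integral_indicator_const _ hT2]
  simp; rfl
end Reg

section Excess
variable {𝒳 : Type*} [MeasurableSpace 𝒳]

lemma excess_eq (lam : Measure (𝒳 × ℝ)) [IsProbabilityMeasure lam]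
    (hW : lam {p : 𝒳 × ℝ | p.2 = 1 ∨ p.2 = -1}ᶜ = 0)
    (μ : Measure 𝒳) [IsProbabilityMeasure μ]
    (m : 𝒳 → ℝ) (hm : Measurable m) (hmi : Integrable m μ)
    (hreg : ∀ A : Set 𝒳, MeasurableSet A →
        ∫ p in {q : 𝒳 × ℝ | q.1 ∈ A}, p.2 ∂lam = ∫ x in A, m x ∂μ)
    (g : 𝒳 → ℝ) (hg : Measurable g) (hgv : ∀ x, g x = 1 ∨ g x = -1) :
    (lam {p : 𝒳 × ℝ | g p.1 ≠ p.2}).toReal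
      - (lam {p : 𝒳 × ℝ | sgn (m p.1) ≠ p.2}).toReal
    = ∫ x in {x | g x ≠ sgn (m x)}, |m x| ∂μ := by
  have hgs : Measurable (fun x => sgn (m x)) := by
    unfold sgn
    exact Measurable.ite (hm measurableSet_Ici) measurable_const measurable_const
  set gs : 𝒳 → ℝ := fun x => sgn (m x) with hgs_def
  set D : Set 𝒳 := {x | g x ≠ gs x} with hD_def
  have hD : MeasurableSet D := (measurableSet_eq_fun hg hgs).compl
  set Dp : Set 𝒳 := D ∩ {x | 0 ≤ m x} with hDp_def
  set Dm : Set 𝒳 := D ∩ {x | m x < 0} with hDm_def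
  have hDp : MeasurableSet Dp := hD.inter (hm measurableSet_Ici)
  have hDm : MeasurableSet Dm := hD.inter (hm measurableSet_Iio)
  set Eg : Set (𝒳 × ℝ) := {p | g p.1 ≠ p.2} with hEg_def
  set Es : Set (𝒳 × ℝ) := {p | gs p.1 ≠ p.2} with hEs_def
  have hEg : MeasurableSet Eg := (measurableSet_eq_fun (hg.comp measurable_fst) measurable_snd).compl
  have hEs : MeasurableSet Es := (measurableSet_eq_fun (hgs.comp measurable_fst) measurable_snd).compl
  set PD : Set (𝒳 × ℝ) := {p | p.1 ∈ D} with hPD_def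
  have hPD : MeasurableSet PD := measurable_fst hD
  set T1 : Set (𝒳 × ℝ) := {p | p.1 ∈ Dp ∧ p.2 = 1} with hT1_def
  set T2 : Set (𝒳 × ℝ) := {p | p.1 ∈ Dm ∧ p.2 = -1} with hT2_def
  set T3 : Set (𝒳 × ℝ) := {p | p.1 ∈ Dp ∧ p.2 = -1} with hT3_def
  set T4 : Set (𝒳 × ℝ) := {p | p.1 ∈ Dm ∧ p.2 = 1} with hT4_def
  have hT1 : MeasurableSet T1 :=
    (measurable_fst hDp).inter (measurable_snd (measurableSet_singleton 1))
  have hT2 : MeasurableSet T2 :=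
    (measurable_fst hDm).inter (measurable_snd (measurableSet_singleton (-1)))
  have hT3 : MeasurableSet T3 :=
    (measurable_fst hDp).inter (measurable_snd (measurableSet_singleton (-1)))
  have hT4 : MeasurableSet T4 :=
    (measurable_fst hDm).inter (measurable_snd (measurableSet_singleton 1))
  -- split off PD
  have hsplit_g : lam Eg = lam (Eg ∩ PD) + lam (Eg \ PD) := (measure_inter_add_diff _ hPD).symm
  have hsplit_s : lam Es = lam (Es ∩ PD) + lam (Es \ PD) := (measure_inter_add_diff _ hPD).symm
  have hdiff_eq : Eg \ PD = Es \ PD := by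
    ext p
    simp only [mem_diff, hEg_def, hEs_def, hPD_def, mem_setOf_eq]
    constructor
    · rintro ⟨h1, h2⟩
      refine ⟨?_, h2⟩
      have : g p.1 = gs p.1 := not_not.mp h2
      rwa [← this]
    · rintro ⟨h1, h2⟩
      refine ⟨?_, h2⟩
      have : g p.1 = gs p.1 := not_not.mp h2
      rwa [this]
  -- identify the parts on D, modulo the conull set W
  have hgs1 : ∀ x, 0 ≤ m x → gs x = 1 := fun x hx => if_pos hx
  have hgs2 : ∀ x, m x < 0 → gs x = -1 := fun x hx => if_neg (not_le.2 hx)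
  have hmain_g : lam (Eg ∩ PD) = lam (T1 ∪ T2) := by
    apply meas_eq_of_eq_on_conull hW
    ext p
    simp only [mem_inter_iff, mem_union, hEg_def, hPD_def, hT1_def, hT2_def, hDp_def, hDm_def,
      mem_setOf_eq, hD_def]
    constructor
    · rintro ⟨⟨h1, h2⟩, hw⟩
      refine ⟨?_, hw⟩
      rcases le_or_gt 0 (m p.1) with hm0 | hm0
      · left
        refine ⟨⟨h2, hm0⟩, ?_⟩
        have hgval : g p.1 = -1 := by
          rcases hgv p.1 with hv | hv
          · exact absurd (hv.trans (hgs1 p.1 hm0).symm) h2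
          · exact hv
        rcases hw with hw1 | hw1
        · exact hw1
        · rw [hgval, hw1] at h1; exact absurd rfl h1
      · right
        refine ⟨⟨h2, hm0⟩, ?_⟩
        have hgval : g p.1 = 1 := by
          rcases hgv p.1 with hv | hv
          · exact hv
          · exact absurd (hv.trans (hgs2 p.1 hm0).symm) h2
        rcases hw with hw1 | hw1
        · rw [hgval, hw1] at h1; exact absurd rfl h1
        · exact hw1
    · rintro ⟨hT, hw⟩
      rcases hT with ⟨⟨hd, hm0⟩, hp2⟩ | ⟨⟨hd, hm0⟩, hp2⟩
      · have hgval : g p.1 = -1 := by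
          rcases hgv p.1 with hv | hv
          · exact absurd (hv.trans (hgs1 p.1 hm0).symm) hd
          · exact hv
        exact ⟨⟨by rw [hgval, hp2]; norm_num, hd⟩, hw⟩
      · have hgval : g p.1 = 1 := by
          rcases hgv p.1 with hv | hv
          · exact hv
          · exact absurd (hv.trans (hgs2 p.1 hm0).symm) hd
        exact ⟨⟨by rw [hgval, hp2]; norm_num, hd⟩, hw⟩
  have hmain_s : lam (Es ∩ PD) = lam (T3 ∪ T4) := by
    apply meas_eq_of_eq_on_conull hW
    ext p
    simp only [mem_inter_iff, mem_union, hEs_def, hPD_def, hT3_def, hT4_def, hDp_def, hDm_def,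
      mem_setOf_eq, hD_def]
    constructor
    · rintro ⟨⟨h1, h2⟩, hw⟩
      refine ⟨?_, hw⟩
      rcases le_or_gt 0 (m p.1) with hm0 | hm0
      · left
        refine ⟨⟨h2, hm0⟩, ?_⟩
        rcases hw with hw1 | hw1
        · rw [hgs1 p.1 hm0, hw1] at h1; exact absurd rfl h1
        · exact hw1
      · right
        refine ⟨⟨h2, hm0⟩, ?_⟩
        rcases hw with hw1 | hw1
        · exact hw1
        · rw [hgs2 p.1 hm0, hw1] at h1; exact absurd rfl h1
    · rintro ⟨hT, hw⟩
      rcases hT with ⟨⟨hd, hm0⟩, hp2⟩ | ⟨⟨hd, hm0⟩, hp2⟩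
      · exact ⟨⟨by rw [hgs1 p.1 hm0, hp2]; norm_num, hd⟩, hw⟩
      · exact ⟨⟨by rw [hgs2 p.1 hm0, hp2]; norm_num, hd⟩, hw⟩
  -- disjoint unions
  have hdisj12 : Disjoint T1 T2 := by
    rw [disjoint_left]
    rintro p ⟨h1, h2⟩ ⟨h3, h4⟩
    rw [h2] at h4; norm_num at h4
  have hdisj34 : Disjoint T3 T4 := by
    rw [disjoint_left]
    rintro p ⟨h1, h2⟩ ⟨h3, h4⟩
    rw [h2] at h4; norm_num at h4
  have hU12 : lam (T1 ∪ T2) = lam T1 + lam T2 := measure_union hdisj12 hT2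
  have hU34 : lam (T3 ∪ T4) = lam T3 + lam T4 := measure_union hdisj34 hT4
  -- integral identities
  have hIp : ∫ x in Dp, m x ∂μ = (lam T1).toReal - (lam T3).toReal := by
    rw [← hreg Dp hDp, integral_snd_eq lam hW hDp]
  have hIm : ∫ x in Dm, m x ∂μ = (lam T4).toReal - (lam T2).toReal := by
    rw [← hreg Dm hDm, integral_snd_eq lam hW hDm]
  -- finiteness
  have fin : ∀ S : Set (𝒳 × ℝ), lam S ≠ ⊤ := fun S => measure_ne_top lam S
  -- assemble
  have key : (lam Eg).toReal - (lam Es).toReal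
      = (∫ x in Dp, m x ∂μ) - ∫ x in Dm, m x ∂μ := by
    rw [hsplit_g, hsplit_s, hdiff_eq, hmain_g, hmain_s, hU12, hU34]
    rw [ENNReal.toReal_add (ENNReal.add_ne_top.mpr ⟨fin _, fin _⟩) (fin _),
        ENNReal.toReal_add (ENNReal.add_ne_top.mpr ⟨fin _, fin _⟩) (fin _),
        ENNReal.toReal_add (fin _) (fin _), ENNReal.toReal_add (fin _) (fin _), hIp, hIm]
    ring
  have habs_p : ∫ x in Dp, m x ∂μ = ∫ x in Dp, |m x| ∂μ := by
    apply setIntegral_congr_fun hDp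
    intro x hx
    exact (abs_of_nonneg hx.2).symm
  have habs_m : -∫ x in Dm, m x ∂μ = ∫ x in Dm, |m x| ∂μ := by
    rw [← integral_neg]
    apply setIntegral_congr_fun hDm
    intro x hx
    exact (abs_of_neg hx.2).symm
  have hDsplit : Dp ∪ Dm = D := by
    rw [hDp_def, hDm_def, ← inter_union_distrib_left]
    have : {x | 0 ≤ m x} ∪ {x | m x < 0} = univ := by
      ext x; simp [le_or_gt]
    rw [this, inter_univ]
  have hdisjD : Disjoint Dp Dm := by
    rw [disjoint_left]
    rintro x ⟨h1, h2⟩ ⟨h3, h4⟩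
    have h4' : m x < 0 := h4
    have h2' : 0 ≤ m x := h2
    exact absurd h2' (not_le.2 h4')
  have hunion : ∫ x in D, |m x| ∂μ = (∫ x in Dp, |m x| ∂μ) + ∫ x in Dm, |m x| ∂μ := by
    rw [← hDsplit]
    exact setIntegral_union hdisjD hDm hmi.abs.integrableOn hmi.abs.integrableOn
  rw [key, sub_eq_add_neg, habs_p, habs_m, ← hunion]
end Excess

section Prob
variable {𝒳 : Type*} [MetricSpace 𝒳] [MeasurableSpace 𝒳] [BorelSpace 𝒳]
variable {Ω : Type*} [MeasurableSpace Ω]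

lemma prob_bound (μ : Measure 𝒳) [IsProbabilityMeasure μ] (x : 𝒳)
    (hHx : ContinuousOn (fun r : ℝ => (μ (Metric.closedBall x r)).toReal) (Ici 0))
    (P : Measure Ω) [IsProbabilityMeasure P]
    {k : ℕ} (hk : 0 < k) (proto : Fin k → Ω → 𝒳) (hpmeas : ∀ j, Measurable (proto j))
    (hplaw : ∀ j, P.map (proto j) = μ)
    (hindep : ProbabilityTheory.iIndepFun proto P)
    (u : ℝ) (hu0 : 0 ≤ u) (hu1 : u < 1) :
    P {ω | 0 < dist x (proto (nearestIdx hk (fun j => proto j ω) x) ω) ∧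
        u < (μ (Metric.closedBall x
          (dist x (proto (nearestIdx hk (fun j => proto j ω) x) ω)))).toReal}
      ≤ ENNReal.ofReal ((1 - u) ^ k) := by
  set Hx : ℝ → ℝ := fun r => (μ (Metric.closedBall x r)).toReal with hHx_def
  set dmin : Ω → ℝ := fun ω => dist x (proto (nearestIdx hk (fun j => proto j ω) x) ω)
    with hdmin_def
  have hdle : ∀ ω i, dmin ω ≤ dist x (proto i ω) := fun ω i =>
    nearestIdx_le hk (fun j => proto j ω) x i
  have hHxmono : ∀ r s : ℝ, r ≤ s → Hx r ≤ Hx s := by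
    intro r s hrs
    apply ENNReal.toReal_mono (measure_ne_top μ _)
    exact measure_mono (Metric.closedBall_subset_closedBall hrs)
  -- find a radius r with u ≤ Hx r and event ⊆ all prototypes outside closedBall x r
  have hmain : ∃ r : ℝ, 0 ≤ r ∧ u ≤ Hx r ∧
      {ω | 0 < dmin ω ∧ u < Hx (dmin ω)} ⊆ ⋂ i, {ω | r < dist x (proto i ω)} := by
    rcases le_or_gt u (Hx 0) with hcase | hcase
    · refine ⟨0, le_refl 0, hcase, fun ω hω => ?_⟩
      rw [mem_iInter]
      intro i
      exact lt_of_lt_of_le hω.1 (hdle ω i)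
    · -- find R with u ≤ Hx R
      have hex : ∃ n : ℕ, ENNReal.ofReal u < μ (Metric.closedBall x n) := by
        by_contra hcon
        push_neg at hcon
        have hmono : Monotone fun n : ℕ => Metric.closedBall x n := fun a b hab =>
          Metric.closedBall_subset_closedBall (by exact_mod_cast hab)
        have htend : Tendsto (fun n : ℕ => μ (Metric.closedBall x n)) atTop
            (nhds (μ (⋃ n : ℕ, Metric.closedBall x n))) := tendsto_measure_iUnion_atTop hmono
        have huniv : (⋃ n : ℕ, Metric.closedBall x n) = univ := by
          ext y
          simp only [mem_iUnion, mem_univ, iff_true]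
          obtain ⟨n, hn⟩ := exists_nat_ge (dist y x)
          exact ⟨n, Metric.mem_closedBall.mpr hn⟩
        rw [huniv, measure_univ] at htend
        have : (1 : ℝ≥0∞) ≤ ENNReal.ofReal u := le_of_tendsto' htend hcon
        have : (1 : ℝ) ≤ u := by
          have h2 := ENNReal.toReal_mono ENNReal.ofReal_ne_top this
          rwa [ENNReal.toReal_one, ENNReal.toReal_ofReal hu0] at h2
        linarith
      obtain ⟨n, hn⟩ := hex
      have hRu : u ≤ Hx n := by
        have := ENNReal.toReal_mono (measure_ne_top μ _) hn.le
        rwa [ENNReal.toReal_ofReal hu0] at this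
      have hIVT : u ∈ Hx '' Icc 0 (n : ℝ) := by
        apply intermediate_value_Icc (Nat.cast_nonneg n)
          (hHx.mono (fun r hr => hr.1))
        exact ⟨hcase.le, hRu⟩
      obtain ⟨r, hr_mem, hr_eq⟩ := hIVT
      refine ⟨r, hr_mem.1, hr_eq.symm.le, fun ω hω => ?_⟩
      rw [mem_iInter]
      intro i
      have hrd : r < dmin ω := by
        by_contra hcon
        push_neg at hcon
        have := hHxmono _ _ hcon
        rw [hr_eq] at this
        exact absurd (lt_of_lt_of_le hω.2 this) (lt_irrefl u)
      exact lt_of_lt_of_le hrd (hdle ω i)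
  obtain ⟨r, hr0, hru, hsub⟩ := hmain
  have hpre : ∀ i, {ω | r < dist x (proto i ω)} = proto i ⁻¹' (Metric.closedBall x r)ᶜ := by
    intro i
    ext ω
    simp only [mem_setOf_eq, mem_preimage, mem_compl_iff, Metric.mem_closedBall, not_le,
      dist_comm]
  have hstep : P {ω | 0 < dmin ω ∧ u < Hx (dmin ω)} ≤ P (⋂ i, proto i ⁻¹' (Metric.closedBall x r)ᶜ) := by
    apply measure_mono
    intro ω hω
    have := hsub hω
    rw [mem_iInter] at this ⊢
    intro i
    rw [← hpre i]
    exact this i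
  have hball : MeasurableSet (Metric.closedBall x r)ᶜ :=
    Metric.isClosed_closedBall.measurableSet.compl
  have hprod : P (⋂ i, proto i ⁻¹' (Metric.closedBall x r)ᶜ)
      = ∏ i : Fin k, P (proto i ⁻¹' (Metric.closedBall x r)ᶜ) := by
    have := hindep.measure_inter_preimage_eq_mul Finset.univ
      (sets := fun _ => (Metric.closedBall x r)ᶜ) (fun i _ => hball)
    simpa using this
  have hfac : ∀ i : Fin k, P (proto i ⁻¹' (Metric.closedBall x r)ᶜ)
      ≤ ENNReal.ofReal (1 - u) := by
    intro i
    have hmap : P (proto i ⁻¹' (Metric.closedBall x r)ᶜ) = μ (Metric.closedBall x r)ᶜ := by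
      rw [← hplaw i, Measure.map_apply (hpmeas i) hball]
    rw [hmap, measure_compl Metric.isClosed_closedBall.measurableSet (measure_ne_top μ _),
      measure_univ]
    have hball_ge : ENNReal.ofReal u ≤ μ (Metric.closedBall x r) := by
      rw [← ENNReal.ofReal_toReal (measure_ne_top μ (Metric.closedBall x r))]
      exact ENNReal.ofReal_le_ofReal hru
    calc (1 : ℝ≥0∞) - μ (Metric.closedBall x r)
        ≤ 1 - ENNReal.ofReal u := tsub_le_tsub_left hball_ge 1
      _ = ENNReal.ofReal 1 - ENNReal.ofReal u := by rw [ENNReal.ofReal_one]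
      _ = ENNReal.ofReal (1 - u) := (ENNReal.ofReal_sub 1 hu0).symm
  calc P {ω | 0 < dmin ω ∧ u < Hx (dmin ω)}
      ≤ ∏ i : Fin k, P (proto i ⁻¹' (Metric.closedBall x r)ᶜ) := hstep.trans hprod.le
    _ ≤ ∏ _i : Fin k, ENNReal.ofReal (1 - u) := Finset.prod_le_prod' fun i _ => hfac i
    _ = ENNReal.ofReal (1 - u) ^ k := by rw [Finset.prod_const, Finset.card_univ, Fintype.card_fin]
    _ = ENNReal.ofReal ((1 - u) ^ k) := (ENNReal.ofReal_pow (by linarith) k).symm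
end Prob

section Numeric

lemma term_bound {k j : ℕ} (hj1 : 1 ≤ j) (hjk : j ≤ k - 1) (hk : 0 < k) :
    (1 - (j : ℝ) / k) ^ k * ((j : ℝ) + 1) ≤ (3 / 4 : ℝ) ^ j := by
  have hkR : (0 : ℝ) < k := by exact_mod_cast hk
  have hjlek : (j : ℝ) ≤ k := by
    have : j ≤ k := hjk.trans (Nat.sub_le k 1)
    exact_mod_cast this
  have h0 : (0 : ℝ) ≤ 1 - (j : ℝ) / k := by
    rw [sub_nonneg, div_le_one hkR]; exact hjlek
  have h1 : (1 - (j : ℝ) / k) ≤ Real.exp (-((j : ℝ) / k)) := by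
    have := Real.add_one_le_exp (-((j : ℝ) / k))
    linarith
  have h2 : (1 - (j : ℝ) / k) ^ k ≤ Real.exp (-((j : ℝ) / k)) ^ k :=
    pow_le_pow_left₀ h0 h1 k
  have h3 : Real.exp (-((j : ℝ) / k)) ^ k = Real.exp (-(j : ℝ)) := by
    rw [← Real.exp_nat_mul]
    congr 1
    field_simp
  have h4 : Real.exp (-(j : ℝ)) = Real.exp (-1) ^ j := by
    rw [← Real.exp_nat_mul]
    congr 1
    ring
  have hexp1 : Real.exp (-1) ≤ 3 / 8 := by
    have he : (8 : ℝ) / 3 ≤ Real.exp 1 := by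
      have := Real.exp_one_gt_d9
      norm_num at this ⊢
      linarith
    rw [Real.exp_neg]
    calc (Real.exp 1)⁻¹ ≤ ((8 : ℝ) / 3)⁻¹ :=
          inv_anti₀ (by norm_num) he
      _ = 3 / 8 := by norm_num
  have h5 : Real.exp (-1) ^ j ≤ (3 / 8 : ℝ) ^ j :=
    pow_le_pow_left₀ (Real.exp_nonneg _) hexp1 j
  have h6 : (j : ℝ) + 1 ≤ 2 ^ j := by
    have hn : j + 1 ≤ 2 ^ j := Nat.succ_le_of_lt (Nat.lt_two_pow_self)
    exact_mod_cast hn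
  calc (1 - (j : ℝ) / k) ^ k * ((j : ℝ) + 1)
      ≤ (3 / 8 : ℝ) ^ j * 2 ^ j := by
        apply mul_le_mul _ h6 (by positivity) (by positivity)
        calc (1 - (j : ℝ) / k) ^ k ≤ Real.exp (-((j : ℝ) / k)) ^ k := h2
          _ = Real.exp (-1) ^ j := by rw [h3, h4]
          _ ≤ (3 / 8 : ℝ) ^ j := h5
    _ = (3 / 4 : ℝ) ^ j := by
        rw [← mul_pow]
        norm_num

lemma geom_tail_bound (k : ℕ) :
    ∑ j ∈ Finset.Icc 1 (k - 1), (3 / 4 : ℝ) ^ j ≤ 4 := by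
  have h1 : ∑ j ∈ Finset.Icc 1 (k - 1), (3 / 4 : ℝ) ^ j
      ≤ ∑' j : ℕ, (3 / 4 : ℝ) ^ j := by
    exact (summable_geometric_of_lt_one (by norm_num) (by norm_num)).sum_le_tsum _
      (fun i _ => by positivity)
  rw [tsum_geometric_of_lt_one (by norm_num) (by norm_num)] at h1
  norm_num at h1
  linarith

end Numeric

section AEbound
variable {𝒳 : Type*} [MeasurableSpace 𝒳]

lemma abs_m_le_one (lam : Measure (𝒳 × ℝ)) [IsProbabilityMeasure lam]
    (hW : lam {p : 𝒳 × ℝ | p.2 = 1 ∨ p.2 = -1}ᶜ = 0)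
    (μ : Measure 𝒳) [IsProbabilityMeasure μ] (hμ : μ = lam.map Prod.fst)
    (m : 𝒳 → ℝ) (hm : Measurable m)
    (hreg : ∀ A : Set 𝒳, MeasurableSet A →
        ∫ p in {q : 𝒳 × ℝ | q.1 ∈ A}, p.2 ∂lam = ∫ x in A, m x ∂μ) :
    ∀ᵐ x ∂μ, |m x| ≤ 1 := by
  have haeW : ∀ᵐ p ∂lam, p ∈ {p : 𝒳 × ℝ | p.2 = 1 ∨ p.2 = -1} := by
    rw [ae_iff]; exact hW
  have habs : ∀ᵐ p ∂lam, |p.2| ≤ 1 := by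
    filter_upwards [haeW] with p hp
    rcases hp with hp | hp <;> rw [hp] <;> norm_num
  have hsnd_int : Integrable (fun p : 𝒳 × ℝ => p.2) lam :=
    integrable_of_bound measurable_snd.aestronglyMeasurable 1 habs
  have hμA : ∀ A : Set 𝒳, MeasurableSet A → μ A = lam {q : 𝒳 × ℝ | q.1 ∈ A} := by
    intro A hA
    rw [hμ, Measure.map_apply measurable_fst hA]
    rfl
  have hkey : ∀ (δ : ℝ) (N : ℕ), 0 < δ →
      μ {x | 1 + δ ≤ m x ∧ m x ≤ N} = 0 ∧ μ {x | -(N:ℝ) ≤ m x ∧ m x ≤ -(1 + δ)} = 0 := by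
    intro δ N hδ
    constructor
    · set A := {x | 1 + δ ≤ m x ∧ m x ≤ N} with hA_def
      have hA : MeasurableSet A := (hm measurableSet_Ici).inter (hm measurableSet_Iic)
      have hAint : IntegrableOn m A μ := by
        apply integrable_of_bound (hm.aestronglyMeasurable.restrict) (N : ℝ)
        filter_upwards [ae_restrict_mem hA] with x hx
        have h1 : 1 + δ ≤ m x := hx.1
        have h2 : m x ≤ N := hx.2
        have h3 : (0:ℝ) ≤ N := Nat.cast_nonneg N
        rw [abs_le]
        constructor <;> linarith
      have hSA : MeasurableSet {q : 𝒳 × ℝ | q.1 ∈ A} := measurable_fst hA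
      have hup : ∫ x in A, m x ∂μ ≤ (μ A).toReal := by
        rw [← hreg A hA]
        calc ∫ p in {q : 𝒳 × ℝ | q.1 ∈ A}, p.2 ∂lam
            ≤ ∫ _p in {q : 𝒳 × ℝ | q.1 ∈ A}, (1:ℝ) ∂lam := by
              apply integral_mono_ae hsnd_int.integrableOn (integrable_const 1)
              filter_upwards [ae_restrict_of_ae habs] with p hp
              exact (abs_le.mp hp).2
          _ = (lam {q : 𝒳 × ℝ | q.1 ∈ A}).toReal := by
              rw [setIntegral_const]; simp; rfl
          _ = (μ A).toReal := by rw [hμA A hA]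
      have hlow : (1 + δ) * (μ A).toReal ≤ ∫ x in A, m x ∂μ :=
        setIntegral_ge_of_const_le_real hA (measure_ne_top μ A) (fun x hx => hx.1) hAint
      have ht0 : (0:ℝ) ≤ (μ A).toReal := ENNReal.toReal_nonneg
      have : (μ A).toReal = 0 := by nlinarith
      exact (ENNReal.toReal_eq_zero_iff _).mp this |>.resolve_right (measure_ne_top μ A)
    · set A := {x | -(N:ℝ) ≤ m x ∧ m x ≤ -(1 + δ)} with hA_def
      have hA : MeasurableSet A := (hm measurableSet_Ici).inter (hm measurableSet_Iic)
      have hAint : IntegrableOn m A μ := by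
        apply integrable_of_bound (hm.aestronglyMeasurable.restrict) (N : ℝ)
        filter_upwards [ae_restrict_mem hA] with x hx
        have h1 : -(N:ℝ) ≤ m x := hx.1
        have h2 : m x ≤ -(1 + δ) := hx.2
        have h3 : (0:ℝ) ≤ N := Nat.cast_nonneg N
        rw [abs_le]
        constructor <;> linarith
      have hSA : MeasurableSet {q : 𝒳 × ℝ | q.1 ∈ A} := measurable_fst hA
      have hlow : -(μ A).toReal ≤ ∫ x in A, m x ∂μ := by
        rw [← hreg A hA]
        calc -(μ A).toReal = ∫ _p in {q : 𝒳 × ℝ | q.1 ∈ A}, (-1:ℝ) ∂lam := by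
              rw [setIntegral_const, hμA A hA]; simp; rfl
          _ ≤ ∫ p in {q : 𝒳 × ℝ | q.1 ∈ A}, p.2 ∂lam := by
              apply integral_mono_ae (integrable_const (-1)) hsnd_int.integrableOn
              filter_upwards [ae_restrict_of_ae habs] with p hp
              exact (abs_le.mp hp).1
      have hup : ∫ x in A, m x ∂μ ≤ -(1 + δ) * (μ A).toReal := by
        calc ∫ x in A, m x ∂μ ≤ ∫ _x in A, -(1 + δ) ∂μ :=
              setIntegral_mono_on hAint (integrable_const _) hA (fun x hx => hx.2)
          _ = -(1 + δ) * (μ A).toReal := by rw [setIntegral_const, smul_eq_mul, measureReal_def]; ring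
      have ht0 : (0:ℝ) ≤ (μ A).toReal := ENNReal.toReal_nonneg
      have : (μ A).toReal = 0 := by nlinarith
      exact (ENNReal.toReal_eq_zero_iff _).mp this |>.resolve_right (measure_ne_top μ A)
  rw [ae_iff]
  have hnull : μ (⋃ n : ℕ,
      ({x | 1 + 1/((n:ℝ)+1) ≤ m x ∧ m x ≤ n}
        ∪ {x | -(n:ℝ) ≤ m x ∧ m x ≤ -(1 + 1/((n:ℝ)+1))})) = 0 := by
    apply measure_iUnion_null
    intro n
    apply measure_union_null
    · exact (hkey (1/((n:ℝ)+1)) n (by positivity)).1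
    · exact (hkey (1/((n:ℝ)+1)) n (by positivity)).2
  refine measure_mono_null (fun x hx => ?_) hnull
  · simp only [mem_setOf_eq, not_le] at hx
    rw [mem_iUnion]
    rcases lt_abs.mp hx with hpos | hneg
    · have hm1 : 1 < m x := hpos
      set n := max ⌈m x⌉₊ ⌈1/(m x - 1)⌉₊ with hn_def
      refine ⟨n, Or.inl ⟨?_, ?_⟩⟩
      · have h1 : (⌈1/(m x - 1)⌉₊ : ℝ) ≤ n := by exact_mod_cast Nat.cast_le.mpr (le_max_right _ _)
        have h2 : 1/(m x - 1) ≤ (n:ℝ) := le_trans (Nat.le_ceil _) h1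
        have h3 : 0 < m x - 1 := by linarith
        have h4 : 1/((n:ℝ)+1) ≤ m x - 1 := by
          rw [div_le_iff₀ (by positivity)]
          have h5 : 1/(m x - 1) * (m x - 1) = 1 := by field_simp
          nlinarith
        linarith
      · have h1 : (⌈m x⌉₊ : ℝ) ≤ n := by exact_mod_cast Nat.cast_le.mpr (le_max_left _ _)
        exact le_trans (Nat.le_ceil _) h1
    · have hm1 : 1 < -m x := hneg
      set n := max ⌈-m x⌉₊ ⌈1/(-m x - 1)⌉₊ with hn_def
      refine ⟨n, Or.inr ⟨?_, ?_⟩⟩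
      · have h1 : (⌈-m x⌉₊ : ℝ) ≤ n := by exact_mod_cast Nat.cast_le.mpr (le_max_left _ _)
        have := le_trans (Nat.le_ceil _) h1
        linarith
      · have h1 : (⌈1/(-m x - 1)⌉₊ : ℝ) ≤ n := by exact_mod_cast Nat.cast_le.mpr (le_max_right _ _)
        have h2 : 1/(-m x - 1) ≤ (n:ℝ) := le_trans (Nat.le_ceil _) h1
        have h3 : 0 < -m x - 1 := by linarith
        have h4 : 1/((n:ℝ)+1) ≤ -m x - 1 := by
          rw [div_le_iff₀ (by positivity)]
          have h5 : 1/(-m x - 1) * (-m x - 1) = 1 := by field_simp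
          nlinarith
        linarith
end AEbound

lemma concave_scale (H : ℝ → ℝ) (hH : ConcaveOn ℝ (Icc (0:ℝ) 1) H) (hH0 : 0 ≤ H 0)
    {b : ℝ} (hb : b ∈ Icc (0:ℝ) 1) {n : ℕ} (hn : 1 ≤ n) :
    H b ≤ n * H (b / n) := by
  have hnR : (1:ℝ) ≤ n := by exact_mod_cast hn
  have hnpos : (0:ℝ) < n := by linarith
  have h0mem : (0:ℝ) ∈ Icc (0:ℝ) 1 := ⟨le_refl 0, zero_le_one⟩
  have hcomb := hH.2 h0mem hb
    (show (0:ℝ) ≤ 1 - 1/(n:ℝ) by rw [sub_nonneg, div_le_one hnpos]; exact hnR)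
    (show (0:ℝ) ≤ 1/(n:ℝ) by positivity)
    (show (1 - 1/(n:ℝ)) + 1/(n:ℝ) = 1 by ring)
  rw [smul_eq_mul, smul_eq_mul, smul_eq_mul, smul_eq_mul, mul_zero, zero_add] at hcomb
  have h1 : 1/(n:ℝ) * b = b / n := by ring
  rw [h1] at hcomb
  have h2 : (1 - 1/(n:ℝ)) * H 0 ≥ 0 := by
    apply mul_nonneg _ hH0
    rw [sub_nonneg, div_le_one hnpos]; exact hnR
  have h3 : 1/(n:ℝ) * H b ≤ H (b / n) := by linarith
  calc H b = (n:ℝ) * (1/(n:ℝ) * H b) := by field_simp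
    _ ≤ n * H (b / n) := by
        apply mul_le_mul_of_nonneg_left h3 (le_of_lt hnpos)

/-- Under continuity of the `H_x`, the generalized Lipschitz condition with
`h^{1+γ}` concave and the margin condition with exponent `γ > 0` and constant `c* ≥ 0`, the
1-NN rule based on `k` i.i.d. prototypes, `g_NN(x) = sign m(X'_{k,1}(x))`, satisfies
`E[L(g_NN)] − L* ≤ C·h(1/k)^{1+γ}` with `C` depending only on `c*` and `γ`. -/
theorem proto_nn_approximation_error
    (γ cstar : ℝ) (hγ : 0 < γ) (hcstar : 0 ≤ cstar) :
    ∃ C : ℝ, 0 < C ∧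
    ∀ (𝒳 : Type) [MetricSpace 𝒳] [TopologicalSpace.SeparableSpace 𝒳]
      [MeasurableSpace 𝒳] [BorelSpace 𝒳]
      (lam : Measure (𝒳 × ℝ)) (_ : IsProbabilityMeasure lam)
      (μ : Measure 𝒳) (_hμ : μ = lam.map Prod.fst)
      (m : 𝒳 → ℝ) (_hm_meas : Measurable m)
      (_hY : lam {p | p.2 = 1 ∨ p.2 = -1} = 1)
      -- `m` is the regression function `m(x) = E[Y | X = x]`
      (_hreg : ∀ A : Set 𝒳, MeasurableSet A →
        ∫ p in {q : 𝒳 × ℝ | q.1 ∈ A}, p.2 ∂lam = ∫ x in A, m x ∂μ)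
      -- the distribution function `H_x` is continuous for each `x`
      (_hH : ∀ x : 𝒳, ContinuousOn (fun r : ℝ => (μ (Metric.closedBall x r)).toReal) (Ici 0))
      -- generalized Lipschitz condition
      (h : ℝ → ℝ) (_hmono : MonotoneOn h (Icc 0 1))
      (_hnonneg : ∀ s ∈ Icc (0 : ℝ) 1, 0 ≤ h s)
      (_hlim : Tendsto h (nhdsWithin 0 (Ioi 0)) (nhds 0))
      (_hconc : ConcaveOn ℝ (Icc (0 : ℝ) 1) (fun s => h s ^ (1 + γ)))
      (_hGL : ∀ x z : 𝒳, |m x - m z| ≤ h ((μ (Metric.closedBall x (dist x z))).toReal))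
      -- margin condition
      (_hmargin : ∀ t : ℝ, 0 < t → t ≤ 1 →
        (μ {x | 0 < |m x| ∧ |m x| ≤ t}).toReal ≤ cstar * t ^ γ)
      -- prototypes
      (k : ℕ) (hk : 0 < k)
      (Ω : Type) (_ : MeasurableSpace Ω) (P : Measure Ω) (_ : IsProbabilityMeasure P)
      (proto : Fin k → Ω → 𝒳) (_hpmeas : ∀ j, Measurable (proto j))
      (_hplaw : ∀ j, P.map (proto j) = μ)
      (_hindep : ProbabilityTheory.iIndepFun proto P),
      (∫ ω, (lam {p : 𝒳 × ℝ |
          sgn (m (proto (nearestIdx hk (fun j => proto j ω) p.1) ω)) ≠ p.2}).toReal ∂P)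
        - (lam {p : 𝒳 × ℝ | sgn (m p.1) ≠ p.2}).toReal
      ≤ C * h ((k : ℝ)⁻¹) ^ (1 + γ) := by
  refine ⟨5 * cstar + 1, by linarith, ?_⟩
  intro 𝒳 _ _ _ _ lam hlam μ hμ m hm hY hreg hH h hmono hnonneg hlim hconc hGL hmargin
    k hk Ω mΩ P hP proto hpmeas hplaw hindep
  haveI : SecondCountableTopology 𝒳 := UniformSpace.secondCountable_of_separable 𝒳
  haveI : IsProbabilityMeasure μ := by
    rw [hμ]; exact Measure.isProbabilityMeasure_map measurable_fst.aemeasurable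
  have hkR : (0:ℝ) < k := by exact_mod_cast hk
  -- the conull set W
  have hWmeas : MeasurableSet {p : 𝒳 × ℝ | p.2 = 1 ∨ p.2 = -1} := by
    have : {p : 𝒳 × ℝ | p.2 = 1 ∨ p.2 = -1} = Prod.snd ⁻¹' ({1} ∪ {-1}) := by
      ext p; simp [mem_preimage, or_comm]
    rw [this]
    exact measurable_snd ((measurableSet_singleton 1).union (measurableSet_singleton (-1)))
  have hW : lam {p : 𝒳 × ℝ | p.2 = 1 ∨ p.2 = -1}ᶜ = 0 := by
    rw [measure_compl hWmeas (measure_ne_top _ _), measure_univ, hY, tsub_self]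
  have hm_ae : ∀ᵐ x ∂μ, |m x| ≤ 1 := abs_m_le_one lam hW μ hμ m hm hreg
  have hmi : Integrable m μ := integrable_of_bound hm.aestronglyMeasurable 1 hm_ae
  -- measurable machinery
  have hN : Measurable (fun q : Ω × 𝒳 => nearestIdx hk (fun j => proto j q.1) q.2) :=
    measurable_nearestIdx hk proto hpmeas
  set Z : Ω × 𝒳 → 𝒳 := fun q => proto (nearestIdx hk (fun j => proto j q.1) q.2) q.1
    with hZ_def
  have hZ : Measurable Z := by
    have hev : Measurable (fun r : Ω × Fin k => proto r.2 r.1) :=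
      measurable_from_prod_countable_left (fun j => hpmeas j)
    exact hev.comp (measurable_fst.prodMk hN)
  set dm : Ω × 𝒳 → ℝ := fun q => dist q.2 (Z q) with hdm_def
  have hdm : Measurable dm := measurable_snd.dist hZ
  have hT : Measurable (fun v : 𝒳 × ℝ => μ (Metric.closedBall v.1 v.2)) := by
    have hGset : MeasurableSet {v : (𝒳 × ℝ) × 𝒳 | dist v.2 v.1.1 ≤ v.1.2} := by
      apply IsClosed.measurableSet
      apply isClosed_le
      · exact continuous_snd.dist (continuous_fst.comp continuous_fst)
      · exact continuous_snd.comp continuous_fst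
    exact measurable_measure_prodMk_left hGset
  set U : Ω × 𝒳 → ℝ := fun q => (μ (Metric.closedBall q.2 (dm q))).toReal with hU_def
  have hU : Measurable U :=
    ENNReal.measurable_toReal.comp (hT.comp (measurable_snd.prodMk hdm))
  have hU0 : ∀ q, 0 ≤ U q := fun q => ENNReal.toReal_nonneg
  have hU1 : ∀ q, U q ≤ 1 := by
    intro q
    rw [hU_def]
    have := prob_le_one (μ := μ) (s := Metric.closedBall q.2 (dm q))
    exact ENNReal.toReal_le_of_le_ofReal zero_le_one (by simpa using this)
  -- monotone envelope of h and threshold function t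
  set gH : ℝ → ℝ := fun u => h (min (max u 0) 1) with hgH_def
  have hgHmono : Monotone gH := by
    intro a b hab
    apply hmono
    · exact ⟨le_min (le_max_right a 0) zero_le_one, min_le_right _ _⟩
    · exact ⟨le_min (le_max_right b 0) zero_le_one, min_le_right _ _⟩
    · exact min_le_min (max_le_max hab (le_refl 0)) (le_refl 1)
  have hgHnonneg : ∀ u, 0 ≤ gH u := by
    intro u
    apply hnonneg
    exact ⟨le_min (le_max_right u 0) zero_le_one, min_le_right _ _⟩
  have hgH_eq : ∀ u, 0 ≤ u → u ≤ 1 → gH u = h u := by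
    intro u h0 h1
    rw [hgH_def]
    simp only [max_eq_left h0, min_eq_left h1]
  have hgHmeas : Measurable gH := hgHmono.measurable
  set t : ℝ → ℝ := fun u => min (gH u) 1 with ht_def
  have htmono : Monotone t := fun a b hab => min_le_min (hgHmono hab) (le_refl 1)
  have htmeas : Measurable t := hgHmeas.min measurable_const
  have ht0 : ∀ u, 0 ≤ t u := fun u => le_min (hgHnonneg u) zero_le_one
  have ht1 : ∀ u, t u ≤ 1 := fun u => min_le_right _ _
  -- the master bound function B
  set B : Ω × 𝒳 → ℝ := fun q =>
    if 0 < dm q ∧ 0 < |m q.2| ∧ |m q.2| ≤ t (U q) then t (U q) else 0 with hB_def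
  have hBcond : MeasurableSet {q : Ω × 𝒳 | 0 < dm q ∧ 0 < |m q.2| ∧ |m q.2| ≤ t (U q)} := by
    refine MeasurableSet.inter (measurableSet_lt measurable_const hdm)
      (MeasurableSet.inter (measurableSet_lt measurable_const
        ((hm.comp measurable_snd).abs)) (measurableSet_le ((hm.comp measurable_snd).abs)
        (htmeas.comp hU)))
  have hB : Measurable B := Measurable.ite hBcond (htmeas.comp hU) measurable_const
  have hBnn : ∀ q, 0 ≤ B q := by
    intro q; rw [hB_def]; dsimp only; split
    · exact ht0 _
    · exact le_refl 0
  have hB1 : ∀ q, B q ≤ 1 := by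
    intro q; rw [hB_def]; dsimp only; split
    · exact ht1 _
    · exact zero_le_one
  -- the NN classifier for fixed ω and the excess-risk identity
  have hgmeas : ∀ ω, Measurable (fun x => sgn (m (Z (ω, x)))) := fun ω =>
    measurable_sgn.comp (hm.comp (hZ.comp measurable_prodMk_left))
  set F : Ω → ℝ := fun ω => (lam {p : 𝒳 × ℝ | sgn (m (Z (ω, p.1))) ≠ p.2}).toReal with hF_def
  set c : ℝ := (lam {p : 𝒳 × ℝ | sgn (m p.1) ≠ p.2}).toReal with hc_def
  have hsgnZ : Measurable (fun q : Ω × (𝒳 × ℝ) => sgn (m (Z (q.1, q.2.1)))) :=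
    measurable_sgn.comp (hm.comp (hZ.comp
      (measurable_fst.prodMk (measurable_fst.comp measurable_snd))))
  have hEset : MeasurableSet {q : Ω × (𝒳 × ℝ) | ¬ sgn (m (Z (q.1, q.2.1))) = q.2.2} :=
    (measurableSet_eq_fun hsgnZ (measurable_snd.comp measurable_snd)).compl
  have hFmeas : Measurable F := by
    have h1 := measurable_measure_prodMk_left (ν := lam) hEset
    exact ENNReal.measurable_toReal.comp h1
  have hFbd : ∀ ω, |F ω| ≤ 1 := by
    intro ω
    rw [hF_def, abs_of_nonneg ENNReal.toReal_nonneg]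
    exact ENNReal.toReal_le_of_le_ofReal zero_le_one (by simpa using prob_le_one (μ := lam))
  have hDmeas : ∀ ω, MeasurableSet {x | sgn (m (Z (ω, x))) ≠ sgn (m x)} := fun ω =>
    (measurableSet_eq_fun (hgmeas ω) (measurable_sgn.comp hm)).compl
  have hstepA : ∀ ω, F ω - c = ∫ x in {x | sgn (m (Z (ω, x))) ≠ sgn (m x)}, |m x| ∂μ :=
    fun ω => excess_eq lam hW μ m hm hmi hreg _ (hgmeas ω) (fun x => sgn_vals _)
  -- step B : pointwise domination by B
  have hBω_int : ∀ ω, Integrable (fun x => B (ω, x)) μ := fun ω =>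
    integrable_of_bound ((hB.comp measurable_prodMk_left).aestronglyMeasurable) 1
      (ae_of_all _ fun x => abs_le.mpr ⟨by linarith [hBnn (ω, x)], hB1 (ω, x)⟩)
  have hstepB : ∀ ω, ∫ x in {x | sgn (m (Z (ω, x))) ≠ sgn (m x)}, |m x| ∂μ
      ≤ ∫ x, B (ω, x) ∂μ := by
    intro ω
    rw [← integral_indicator (hDmeas ω)]
    apply integral_mono_ae (hmi.abs.indicator (hDmeas ω)) (hBω_int ω)
    filter_upwards [hm_ae] with x hx
    by_cases hxD : x ∈ {x | sgn (m (Z (ω, x))) ≠ sgn (m x)}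
    · rw [indicator_of_mem hxD]
      rcases eq_or_lt_of_le (abs_nonneg (m x)) with hm0 | hm0
      · rw [← hm0]; exact hBnn _
      · -- positive margin at x
        have hxD' : sgn (m (Z (ω, x))) ≠ sgn (m x) := hxD
        have hd0 : 0 < dm (ω, x) := by
          rcases eq_or_lt_of_le (dist_nonneg (x := x) (y := Z (ω, x))) with hd | hd
          · exfalso
            have : x = Z (ω, x) := by
              rw [← dist_eq_zero (x := x) (y := Z (ω, x))]; exact hd.symm
            exact hxD' (by rw [← this])
          · exact hd
        have hkey : |m x| ≤ |m x - m (Z (ω, x))| := by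
          by_cases hsx : 0 ≤ m x
          · have h1 : sgn (m x) = 1 := if_pos hsx
            have h2 : sgn (m (Z (ω, x))) = -1 := by
              rcases sgn_vals (m (Z (ω, x))) with hv | hv
              · exact absurd (hv.trans h1.symm) hxD'
              · exact hv
            have h3 : m (Z (ω, x)) < 0 := by
              by_contra hcon
              push_neg at hcon
              have : sgn (m (Z (ω, x))) = 1 := if_pos hcon
              rw [this] at h2; norm_num at h2
            rw [abs_of_nonneg hsx]
            exact le_trans (by linarith) (le_abs_self _)
          · push_neg at hsx
            have h1 : sgn (m x) = -1 := if_neg (not_le.2 hsx)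
            have h2 : sgn (m (Z (ω, x))) = 1 := by
              rcases sgn_vals (m (Z (ω, x))) with hv | hv
              · exact hv
              · exact absurd (hv.trans h1.symm) hxD'
            have h3 : 0 ≤ m (Z (ω, x)) := by
              by_contra hcon
              push_neg at hcon
              have : sgn (m (Z (ω, x))) = -1 := if_neg (not_le.2 hcon)
              rw [this] at h2; norm_num at h2
            rw [abs_of_neg hsx]
            exact le_trans (by linarith) (neg_le_abs _)
        have hgl := hGL x (Z (ω, x))
        have hUx : |m x| ≤ t (U (ω, x)) := by
          apply le_min _ hx
          rw [hgH_eq _ (hU0 (ω, x)) (hU1 (ω, x))]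
          exact hkey.trans hgl
        have : B (ω, x) = t (U (ω, x)) := by
          rw [hB_def]; exact if_pos ⟨hd0, hm0, hUx⟩
        rw [this]
        exact hUx
    · rw [indicator_of_notMem hxD]
      exact hBnn _
  -- step C : integrate over ω and use Fubini
  have hBprod_int : Integrable B (P.prod μ) :=
    integrable_of_bound hB.aestronglyMeasurable 1
      (ae_of_all _ fun q => abs_le.mpr ⟨by linarith [hBnn q], hB1 q⟩)
  have hFint : Integrable F P :=
    integrable_of_bound hFmeas.aestronglyMeasurable 1 (ae_of_all _ hFbd)
  have hGint : Integrable (fun ω => ∫ x, B (ω, x) ∂μ) P := hBprod_int.integral_prod_left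
  have hmain1 : (∫ ω, F ω ∂P) - c ≤ ∫ ω, (∫ x, B (ω, x) ∂μ) ∂P := by
    have h1 : (∫ ω, F ω ∂P) - c = ∫ ω, (F ω - c) ∂P := by
      rw [integral_sub hFint (integrable_const c), integral_const, probReal_univ]
      simp
    rw [h1]
    apply integral_mono_ae (hFint.sub (integrable_const c)) hGint
    apply ae_of_all
    intro ω
    simp only [Pi.sub_apply]
    rw [hstepA ω]
    exact hstepB ω
  have hswap : ∫ ω, (∫ x, B (ω, x) ∂μ) ∂P = ∫ x, (∫ ω, B (ω, x) ∂P) ∂μ :=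
    integral_integral_swap (f := fun ω x => B (ω, x)) hBprod_int
  -- the threshold functions φ x v
  set φ : 𝒳 → ℝ → ℝ := fun x v => if 0 < |m x| ∧ |m x| ≤ t v then t v else 0 with hφ_def
  have hφnn : ∀ x v, 0 ≤ φ x v := by
    intro x v; rw [hφ_def]; dsimp only; split
    · exact ht0 _
    · exact le_refl 0
  have hφ_ge : ∀ x u v, u ≤ v → 0 < |m x| → |m x| ≤ t u → t u ≤ φ x v := by
    intro x u v huv hpos hle
    have h2 : |m x| ≤ t v := le_trans hle (htmono huv)
    rw [hφ_def]; dsimp only; rw [if_pos ⟨hpos, h2⟩]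
    exact htmono huv
  -- step D : for each fixed x, bound the ω-average of B
  have hstepD : ∀ x : 𝒳, (∫ ω, B (ω, x) ∂P)
      ≤ φ x (1/(k:ℝ)) + ∑ j ∈ Finset.Icc 1 (k-1),
          (1 - (j:ℝ)/(k:ℝ))^k * φ x (((j:ℝ)+1)/(k:ℝ)) := by
    intro x
    set Aj : ℕ → Set Ω := fun j => {ω | 0 < dm (ω, x) ∧ (j:ℝ)/(k:ℝ) < U (ω, x)} with hAj_def
    have hAjmeas : ∀ j, MeasurableSet (Aj j) := by
      intro j
      have h1 : Measurable (fun ω => dm (ω, x)) := hdm.comp measurable_prodMk_right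
      have h2 : Measurable (fun ω => U (ω, x)) := hU.comp measurable_prodMk_right
      exact (measurableSet_lt measurable_const h1).inter (measurableSet_lt measurable_const h2)
    have hpt : ∀ ω, B (ω, x) ≤ φ x (1/(k:ℝ))
        + ∑ j ∈ Finset.Icc 1 (k-1),
            (Aj j).indicator (fun _ => φ x (((j:ℝ)+1)/(k:ℝ))) ω := by
      intro ω
      have hsum_nn : 0 ≤ ∑ j ∈ Finset.Icc 1 (k-1),
          (Aj j).indicator (fun _ => φ x (((j:ℝ)+1)/(k:ℝ))) ω :=
        Finset.sum_nonneg fun j _ => Set.indicator_nonneg (fun _ _ => hφnn x _) ω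
      by_cases hcond : 0 < dm (ω, x) ∧ 0 < |m (ω, x).2| ∧ |m (ω, x).2| ≤ t (U (ω, x))
      · obtain ⟨hd0, hm0, hmt⟩ := hcond
        have hBval : B (ω, x) = t (U (ω, x)) := by rw [hB_def]; exact if_pos ⟨hd0, hm0, hmt⟩
        rcases le_or_gt (U (ω, x)) (1/(k:ℝ)) with hUle | hUgt
        · have := hφ_ge x (U (ω, x)) (1/(k:ℝ)) hUle hm0 hmt
          rw [hBval]
          linarith
        · set n := ⌈(k:ℝ) * U (ω, x)⌉₊ with hn_def
          have hkU1 : (1:ℝ) < (k:ℝ) * U (ω, x) := by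
            have := (div_lt_iff₀ hkR).mp hUgt
            calc (1:ℝ) = 1/(k:ℝ) * k := by field_simp
              _ < U (ω, x) * k := by
                  apply mul_lt_mul_of_pos_right hUgt hkR
              _ = (k:ℝ) * U (ω, x) := by ring
          have hn2 : 2 ≤ n := by
            have : 1 < n := Nat.lt_ceil.mpr (by exact_mod_cast hkU1)
            omega
          have hnk : n ≤ k := by
            apply Nat.ceil_le.mpr
            calc (k:ℝ) * U (ω, x) ≤ (k:ℝ) * 1 :=
                  mul_le_mul_of_nonneg_left (hU1 (ω, x)) (le_of_lt hkR)
              _ = (k:ℝ) := by ring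
          set j := n - 1 with hj_def
          have hj1 : 1 ≤ j := by omega
          have hjk1 : j ≤ k - 1 := by omega
          have hjcast : (j:ℝ) = (n:ℝ) - 1 := by
            rw [hj_def, Nat.cast_sub (by omega)]; simp
          have hlow : (j:ℝ)/(k:ℝ) < U (ω, x) := by
            rw [div_lt_iff₀ hkR]
            by_contra hcon
            push_neg at hcon
            have : n ≤ j := Nat.ceil_le.mpr (by
              rw [mul_comm] at hcon
              exact_mod_cast hcon)
            omega
          have hup : U (ω, x) ≤ ((j:ℝ)+1)/(k:ℝ) := by
            rw [le_div_iff₀ hkR]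
            have := Nat.le_ceil ((k:ℝ) * U (ω, x))
            rw [← hn_def] at this
            rw [hjcast]
            rw [mul_comm]
            linarith
          have hmem : j ∈ Finset.Icc 1 (k-1) := Finset.mem_Icc.mpr ⟨hj1, hjk1⟩
          have hωA : ω ∈ Aj j := ⟨hd0, hlow⟩
          have hterm : (Aj j).indicator (fun _ => φ x (((j:ℝ)+1)/(k:ℝ))) ω
              = φ x (((j:ℝ)+1)/(k:ℝ)) := indicator_of_mem hωA _
          have hle : t (U (ω, x)) ≤ φ x (((j:ℝ)+1)/(k:ℝ)) := hφ_ge x _ _ hup hm0 hmt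
          have hsingle : (Aj j).indicator (fun _ => φ x (((j:ℝ)+1)/(k:ℝ))) ω
              ≤ ∑ j' ∈ Finset.Icc 1 (k-1),
                  (Aj j').indicator (fun _ => φ x (((j':ℝ)+1)/(k:ℝ))) ω :=
            Finset.single_le_sum
              (f := fun j' => (Aj j').indicator (fun _ => φ x (((j':ℝ)+1)/(k:ℝ))) ω)
              (fun j' _ => Set.indicator_nonneg (fun _ _ => hφnn x _) ω) hmem
          rw [hBval]
          calc t (U (ω, x)) ≤ φ x (((j:ℝ)+1)/(k:ℝ)) := hle
            _ = (Aj j).indicator (fun _ => φ x (((j:ℝ)+1)/(k:ℝ))) ω := hterm.symm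
            _ ≤ ∑ j' ∈ Finset.Icc 1 (k-1),
                  (Aj j').indicator (fun _ => φ x (((j':ℝ)+1)/(k:ℝ))) ω := hsingle
            _ ≤ φ x (1/(k:ℝ)) + _ := le_add_of_nonneg_left (hφnn x _)
      · have hBval : B (ω, x) = 0 := by rw [hB_def]; exact if_neg hcond
        rw [hBval]
        exact add_nonneg (hφnn x _) hsum_nn
    have hind_int : ∀ j : ℕ, Integrable
        ((Aj j).indicator (fun _ => φ x (((j:ℝ)+1)/(k:ℝ)))) P :=
      fun j => (integrable_const _).indicator (hAjmeas j)
    have hrhs_int : Integrable (fun ω => φ x (1/(k:ℝ))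
        + ∑ j ∈ Finset.Icc 1 (k-1),
            (Aj j).indicator (fun _ => φ x (((j:ℝ)+1)/(k:ℝ))) ω) P := by
      apply (integrable_const _).add
      exact integrable_finset_sum _ (fun j _ => hind_int j)
    have hPAj : ∀ j ∈ Finset.Icc 1 (k-1), (P (Aj j)).toReal ≤ (1 - (j:ℝ)/(k:ℝ))^k := by
      intro j hj
      rw [Finset.mem_Icc] at hj
      have hjk : j < k := by omega
      have hu0 : (0:ℝ) ≤ (j:ℝ)/(k:ℝ) := by positivity
      have hu1 : (j:ℝ)/(k:ℝ) < 1 := by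
        rw [div_lt_one hkR]; exact_mod_cast hjk
      have hpb := prob_bound μ x (hH x) P hk proto hpmeas hplaw hindep
        ((j:ℝ)/(k:ℝ)) hu0 hu1
      have h2 := ENNReal.toReal_mono ENNReal.ofReal_ne_top hpb
      rwa [ENNReal.toReal_ofReal (pow_nonneg (by linarith) k)] at h2
    calc ∫ ω, B (ω, x) ∂P
        ≤ ∫ ω, (φ x (1/(k:ℝ))
            + ∑ j ∈ Finset.Icc 1 (k-1),
                (Aj j).indicator (fun _ => φ x (((j:ℝ)+1)/(k:ℝ))) ω) ∂P := by
          apply integral_mono_ae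
            (integrable_of_bound ((hB.comp measurable_prodMk_right).aestronglyMeasurable) 1
              (ae_of_all _ fun ω => by
                show |B (ω, x)| ≤ 1
                exact abs_le.mpr ⟨by linarith [hBnn (ω, x)], hB1 (ω, x)⟩))
            hrhs_int (ae_of_all _ hpt)
      _ = φ x (1/(k:ℝ)) + ∑ j ∈ Finset.Icc 1 (k-1),
            (P (Aj j)).toReal * φ x (((j:ℝ)+1)/(k:ℝ)) := by
          rw [integral_add (integrable_const _) (integrable_finset_sum _ fun j _ => hind_int j),
            integral_const, probReal_univ, integral_finset_sum _ (fun j _ => hind_int j)]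
          simp only [ENNReal.toReal_one, one_smul]
          congr 1
          apply Finset.sum_congr rfl
          intro j _
          rw [integral_indicator_const _ (hAjmeas j), smul_eq_mul, measureReal_def]
      _ ≤ φ x (1/(k:ℝ)) + ∑ j ∈ Finset.Icc 1 (k-1),
            (1 - (j:ℝ)/(k:ℝ))^k * φ x (((j:ℝ)+1)/(k:ℝ)) := by
          apply add_le_add_right
          apply Finset.sum_le_sum
          intro j hj
          exact mul_le_mul_of_nonneg_right (hPAj j hj) (hφnn x _)
  -- step E : integrate over x, apply margin and concavity
  set Hk : ℝ := h ((k:ℝ)⁻¹) ^ (1+γ) with hHk_def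
  have hk1R : (1:ℝ) ≤ k := by exact_mod_cast hk
  have hinvk0 : (0:ℝ) ≤ (k:ℝ)⁻¹ := by positivity
  have hinvk1 : (k:ℝ)⁻¹ ≤ 1 := by
    rw [inv_le_one_iff₀]
    right; exact hk1R
  have hHknn : 0 ≤ Hk := Real.rpow_nonneg (hnonneg _ ⟨hinvk0, hinvk1⟩) _
  have h1k : 1/(k:ℝ) = (k:ℝ)⁻¹ := one_div _
  have hSv : ∀ v : ℝ, MeasurableSet {x | 0 < |m x| ∧ |m x| ≤ t v} := fun v =>
    (measurableSet_lt measurable_const hm.abs).inter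
      (measurableSet_le hm.abs measurable_const)
  have hφeq : ∀ v : ℝ, (fun x => φ x v)
      = Set.indicator {x | 0 < |m x| ∧ |m x| ≤ t v} (fun _ => t v) := by
    intro v; funext x; rw [hφ_def]; dsimp only
    by_cases hc : 0 < |m x| ∧ |m x| ≤ t v
    · rw [if_pos hc,
        Set.indicator_of_mem (show x ∈ {x | 0 < |m x| ∧ |m x| ≤ t v} from hc)]
    · rw [if_neg hc,
        Set.indicator_of_notMem (show x ∉ {x | 0 < |m x| ∧ |m x| ≤ t v} from hc)]
  have hφint : ∀ v : ℝ, Integrable (fun x => φ x v) μ := fun v => by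
    rw [hφeq v]; exact (integrable_const _).indicator (hSv v)
  have hIbound : ∀ v : ℝ, ∫ x, φ x v ∂μ ≤ cstar * t v ^ (1+γ) := by
    intro v
    rw [hφeq v, integral_indicator_const _ (hSv v), smul_eq_mul]
    rcases eq_or_lt_of_le (ht0 v) with h0 | h0
    · rw [← h0]
      have hempty : {x | 0 < |m x| ∧ |m x| ≤ (0:ℝ)} = ∅ := by
        ext x; simp only [mem_setOf_eq, mem_empty_iff_false, iff_false, not_and, not_le]
        intro h1; exact h1
      rw [hempty]
      simp [Real.zero_rpow (by linarith : (1:ℝ)+γ ≠ 0)]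
    · have hmarg := hmargin (t v) h0 (ht1 v)
      calc (μ {x | 0 < |m x| ∧ |m x| ≤ t v}).toReal * t v
          ≤ (cstar * t v ^ γ) * t v := mul_le_mul_of_nonneg_right hmarg (ht0 v)
        _ = cstar * t v ^ (1+γ) := by
            rw [Real.rpow_add h0, Real.rpow_one]; ring
  have htv_le : ∀ v, t v ^ (1+γ) ≤ gH v ^ (1+γ) := fun v =>
    Real.rpow_le_rpow (ht0 v) (min_le_left _ _) (by linarith)
  have hgH1k : gH (1/(k:ℝ)) = h ((k:ℝ)⁻¹) := by
    rw [hgH_eq _ (by positivity) (by rw [← h1k] at hinvk1; exact hinvk1), h1k]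
  have ht1k : t (1/(k:ℝ)) ^ (1+γ) ≤ Hk := by
    calc t (1/(k:ℝ)) ^ (1+γ) ≤ gH (1/(k:ℝ)) ^ (1+γ) := htv_le _
      _ = Hk := by rw [hgH1k]
  have hconcj : ∀ j ∈ Finset.Icc 1 (k-1),
      t (((j:ℝ)+1)/(k:ℝ)) ^ (1+γ) ≤ ((j:ℝ)+1) * Hk := by
    intro j hj
    rw [Finset.mem_Icc] at hj
    have hjk' : j + 1 ≤ k := by omega
    have hvmem : ((j:ℝ)+1)/(k:ℝ) ∈ Icc (0:ℝ) 1 := by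
      constructor
      · positivity
      · rw [div_le_one hkR]; exact_mod_cast hjk'
    have hgHv : gH (((j:ℝ)+1)/(k:ℝ)) = h (((j:ℝ)+1)/(k:ℝ)) := hgH_eq _ hvmem.1 hvmem.2
    have hcs := concave_scale (fun s => h s ^ (1+γ)) hconc
      (Real.rpow_nonneg (hnonneg 0 ⟨le_refl 0, zero_le_one⟩) _) hvmem
      (n := j+1) (by omega)
    have hdiv : (((j:ℝ)+1)/(k:ℝ)) / (((j+1:ℕ)):ℝ) = (k:ℝ)⁻¹ := by
      push_cast
      have : (j:ℝ) + 1 ≠ 0 := by positivity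
      field_simp
    calc t (((j:ℝ)+1)/(k:ℝ)) ^ (1+γ) ≤ gH (((j:ℝ)+1)/(k:ℝ)) ^ (1+γ) := htv_le _
      _ = h (((j:ℝ)+1)/(k:ℝ)) ^ (1+γ) := by rw [hgHv]
      _ ≤ ((j+1:ℕ):ℝ) * h ((((j:ℝ)+1)/(k:ℝ)) / (((j+1:ℕ)):ℝ)) ^ (1+γ) := hcs
      _ = ((j:ℝ)+1) * Hk := by rw [hdiv, hHk_def]; push_cast; ring
  have hcoeff_nn : ∀ j ∈ Finset.Icc 1 (k-1), (0:ℝ) ≤ (1 - (j:ℝ)/(k:ℝ))^k := by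
    intro j hj
    rw [Finset.mem_Icc] at hj
    have hjk : j < k := by omega
    apply pow_nonneg
    have : (j:ℝ)/(k:ℝ) < 1 := by rw [div_lt_one hkR]; exact_mod_cast hjk
    linarith
  have hxint1 : Integrable (fun x => ∫ ω, B (ω, x) ∂P) μ := hBprod_int.integral_prod_right
  have hrhs2_int : Integrable (fun x => φ x (1/(k:ℝ))
      + ∑ j ∈ Finset.Icc 1 (k-1), (1 - (j:ℝ)/(k:ℝ))^k * φ x (((j:ℝ)+1)/(k:ℝ))) μ := by
    apply (hφint _).add
    apply integrable_finset_sum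
    intro j _
    exact (hφint _).const_mul _
  have hstepE : ∫ x, (∫ ω, B (ω, x) ∂P) ∂μ ≤ (5 * cstar + 1) * Hk := by
    calc ∫ x, (∫ ω, B (ω, x) ∂P) ∂μ
        ≤ ∫ x, (φ x (1/(k:ℝ))
            + ∑ j ∈ Finset.Icc 1 (k-1),
                (1 - (j:ℝ)/(k:ℝ))^k * φ x (((j:ℝ)+1)/(k:ℝ))) ∂μ :=
          integral_mono_ae hxint1 hrhs2_int (ae_of_all _ hstepD)
      _ = (∫ x, φ x (1/(k:ℝ)) ∂μ)
            + ∑ j ∈ Finset.Icc 1 (k-1),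
                (1 - (j:ℝ)/(k:ℝ))^k * ∫ x, φ x (((j:ℝ)+1)/(k:ℝ)) ∂μ := by
          rw [integral_add (hφint _) (integrable_finset_sum _ fun j _ => (hφint _).const_mul _),
            integral_finset_sum _ (fun j _ => (hφint _).const_mul _)]
          congr 1
          apply Finset.sum_congr rfl
          intro j _
          rw [MeasureTheory.integral_const_mul]
      _ ≤ cstar * t (1/(k:ℝ)) ^ (1+γ)
            + ∑ j ∈ Finset.Icc 1 (k-1),
                (1 - (j:ℝ)/(k:ℝ))^k * (cstar * t (((j:ℝ)+1)/(k:ℝ)) ^ (1+γ)) := by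
          apply add_le_add (hIbound _)
          apply Finset.sum_le_sum
          intro j hj
          exact mul_le_mul_of_nonneg_left (hIbound _) (hcoeff_nn j hj)
      _ ≤ cstar * Hk
            + ∑ j ∈ Finset.Icc 1 (k-1),
                (1 - (j:ℝ)/(k:ℝ))^k * (((j:ℝ)+1) * (cstar * Hk)) := by
          apply add_le_add (mul_le_mul_of_nonneg_left ht1k hcstar)
          apply Finset.sum_le_sum
          intro j hj
          apply mul_le_mul_of_nonneg_left _ (hcoeff_nn j hj)
          calc cstar * t (((j:ℝ)+1)/(k:ℝ)) ^ (1+γ)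
              ≤ cstar * (((j:ℝ)+1) * Hk) :=
                mul_le_mul_of_nonneg_left (hconcj j hj) hcstar
            _ = ((j:ℝ)+1) * (cstar * Hk) := by ring
      _ ≤ cstar * Hk + ∑ j ∈ Finset.Icc 1 (k-1), (3/4:ℝ)^j * (cstar * Hk) := by
          apply add_le_add_right
          apply Finset.sum_le_sum
          intro j hj
          rw [Finset.mem_Icc] at hj
          have htb := term_bound hj.1 hj.2 hk
          have : (1 - (j:ℝ)/(k:ℝ))^k * (((j:ℝ)+1) * (cstar * Hk))
              = ((1 - (j:ℝ)/(k:ℝ))^k * ((j:ℝ)+1)) * (cstar * Hk) := by ring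
          rw [this]
          exact mul_le_mul_of_nonneg_right htb (by positivity)
      _ = (1 + ∑ j ∈ Finset.Icc 1 (k-1), (3/4:ℝ)^j) * (cstar * Hk) := by
          rw [← Finset.sum_mul]
          ring
      _ ≤ (1 + 4) * (cstar * Hk) := by
          apply mul_le_mul_of_nonneg_right _ (by positivity)
          have := geom_tail_bound k
          linarith
      _ ≤ (5 * cstar + 1) * Hk := by nlinarith
  -- final assembly
  show (∫ ω, F ω ∂P) - c ≤ (5 * cstar + 1) * Hk
  calc (∫ ω, F ω ∂P) - c
      ≤ ∫ ω, (∫ x, B (ω, x) ∂μ) ∂P := hmain1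
    _ = ∫ x, (∫ ω, B (ω, x) ∂P) ∂μ := hswap
    _ ≤ (5 * cstar + 1) * Hk := hstepE
end

section
/- Let (X_1, Y_1), …, (X_n, Y_n) be i.i.d. copies of a random pair (X, Y), where X takes values in a measurable space 𝒳 with distribution μ and Y takes values in {−1, +1}, and let A_1, …, A_k be pairwise disjoint measurable subsets of 𝒳. With ν(A) = E[Y·1{X ∈ A}] and ν_n(A) = (1/n) Σ_{i=1}^n Y_i·1{X_i ∈ A}, one has Σ_{j=1}^k P(|ν_n(A_j) − ν(A_j)| ≥ |ν(A_j)|)·|ν(A_j)| ≤ (1/√n) Σ_{j=1}^k √(μ(A_j)) ≤ √(k/n). -/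
open MeasureTheory Set

/-- Summed Chebyshev bound over a family of pairwise disjoint cells: with
`ν(A_j) = E[Y·1{X ∈ A_j}]` and `ν_n(A_j) = (1/n)Σ_i Y_i 1{X_i ∈ A_j}`,
`Σ_j P(|ν_n(A_j) − ν(A_j)| ≥ |ν(A_j)|)·|ν(A_j)| ≤ (1/√n) Σ_j √(μ(A_j)) ≤ √(k/n)`. -/
theorem summed_chebyshev_cells_bound
    {𝒳 : Type*} [MeasurableSpace 𝒳]
    (lam : Measure (𝒳 × ℝ)) [IsProbabilityMeasure lam]
    (μ : Measure 𝒳) (hμ : μ = lam.map Prod.fst)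
    (hY : lam {p | p.2 = 1 ∨ p.2 = -1} = 1)
    {n k : ℕ} (hn : 0 < n) (hk : 0 < k)
    {Ω : Type*} [MeasurableSpace Ω] (P : Measure Ω) [IsProbabilityMeasure P]
    (Xdat : Fin n → Ω → 𝒳) (Ydat : Fin n → Ω → ℝ)
    (hXmeas : ∀ i, Measurable (Xdat i)) (hYmeas : ∀ i, Measurable (Ydat i))
    (hlaw : ∀ i, P.map (fun ω => (Xdat i ω, Ydat i ω)) = lam)
    (hindep : ProbabilityTheory.iIndepFun
      (fun i ω => (Xdat i ω, Ydat i ω)) P)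
    (A : Fin k → Set 𝒳) (hA : ∀ j, MeasurableSet (A j))
    (hdisj : ∀ j j' : Fin k, j ≠ j' → Disjoint (A j) (A j'))
    (ν : Fin k → ℝ) (hν_def : ∀ j, ν j = ∫ p in {q : 𝒳 × ℝ | q.1 ∈ A j}, p.2 ∂lam) :
    (∑ j : Fin k,
      (P {ω | |(n : ℝ)⁻¹ * (∑ i, Ydat i ω * (A j).indicator (fun _ => (1 : ℝ)) (Xdat i ω))
          - ν j| ≥ |ν j|}).toReal * |ν j|)
      ≤ (1 / Real.sqrt n) * ∑ j : Fin k, Real.sqrt ((μ (A j)).toReal) ∧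
    (1 / Real.sqrt n) * (∑ j : Fin k, Real.sqrt ((μ (A j)).toReal))
      ≤ Real.sqrt (k / n) := by
  classical
  have hn0 : (0 : ℝ) < n := by exact_mod_cast hn
  have hsn : (0 : ℝ) < Real.sqrt n := Real.sqrt_pos.2 hn0
  have hpairmeas : ∀ i, Measurable fun ω => (Xdat i ω, Ydat i ω) :=
    fun i => (hXmeas i).prodMk (hYmeas i)
  -- measurability of the ±1 set
  have hsY : MeasurableSet {p : 𝒳 × ℝ | p.2 = 1 ∨ p.2 = -1} := by
    have : {p : 𝒳 × ℝ | p.2 = 1 ∨ p.2 = -1}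
        = Prod.snd ⁻¹' ({1} ∪ {-1}) := by
      ext p; simp [Set.mem_union, or_comm]
    rw [this]
    exact measurable_snd ((measurableSet_singleton 1).union (measurableSet_singleton (-1)))
  -- Key per-cell bound
  have key : ∀ j : Fin k,
      (P {ω | |(n : ℝ)⁻¹ * (∑ i, Ydat i ω * (A j).indicator (fun _ => (1 : ℝ)) (Xdat i ω))
          - ν j| ≥ |ν j|}).toReal * |ν j|
        ≤ Real.sqrt ((μ (A j)).toReal) / Real.sqrt n := by
    intro j
    set m : ℝ := (μ (A j)).toReal with hm
    have hm0 : 0 ≤ m := ENNReal.toReal_nonneg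
    set g : 𝒳 × ℝ → ℝ := fun p => p.2 * (A j).indicator (fun _ => (1 : ℝ)) p.1 with hgdef
    have hgmeas : Measurable g :=
      measurable_snd.mul ((measurable_const.indicator (hA j)).comp measurable_fst)
    set Z : Fin n → Ω → ℝ := fun i ω => g (Xdat i ω, Ydat i ω) with hZdef
    have hZmeas : ∀ i, Measurable (Z i) := fun i => hgmeas.comp (hpairmeas i)
    have hsetmeas : MeasurableSet {q : 𝒳 × ℝ | q.1 ∈ A j} := measurable_fst (hA j)
    -- Y is a.e. ±1
    have hYae : ∀ i, ∀ᵐ ω ∂P, Ydat i ω = 1 ∨ Ydat i ω = -1 := by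
      intro i
      have h1 : P {ω | Ydat i ω = 1 ∨ Ydat i ω = -1} = 1 := by
        have := Measure.map_apply (μ := P) (hpairmeas i) hsY
        rw [hlaw i, hY] at this
        exact this.symm
      have hmB : MeasurableSet {ω | Ydat i ω = 1 ∨ Ydat i ω = -1} := by
        exact ((hYmeas i) (measurableSet_singleton 1)).union
          ((hYmeas i) (measurableSet_singleton (-1)))
      rw [ae_iff]
      have hcompl : {ω | ¬(Ydat i ω = 1 ∨ Ydat i ω = -1)}
          = {ω | Ydat i ω = 1 ∨ Ydat i ω = -1}ᶜ := rfl
      rw [hcompl, prob_compl_eq_zero_iff hmB]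
      exact h1
    -- boundedness, hence Memℒp
    have hZbound : ∀ i, ∀ᵐ ω ∂P, ‖Z i ω‖ ≤ 1 := by
      intro i
      filter_upwards [hYae i] with ω hω
      have hY1 : |Ydat i ω| = 1 := by rcases hω with h | h <;> simp [h]
      have hind : |(A j).indicator (fun _ => (1 : ℝ)) (Xdat i ω)| ≤ 1 := by
        by_cases hx : Xdat i ω ∈ A j <;> simp [Set.indicator, hx]
      calc ‖Z i ω‖ = |Ydat i ω| * |(A j).indicator (fun _ => (1 : ℝ)) (Xdat i ω)| := by
            simp [Z, g, abs_mul, Real.norm_eq_abs]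
        _ ≤ 1 * 1 := by rw [hY1]; exact mul_le_mul_of_nonneg_left hind (by norm_num)
        _ = 1 := by norm_num
    have hZℒp : ∀ i, MemLp (Z i) 2 P := fun i =>
      MemLp.of_bound (hZmeas i).aestronglyMeasurable 1 (hZbound i)
    -- expectation of each Z i is ν j
    have hglam : ∀ i, ∀ (F : (𝒳 × ℝ) → ℝ), Measurable F →
        ∫ ω, F (Xdat i ω, Ydat i ω) ∂P = ∫ p, F p ∂lam := by
      intro i F hF
      rw [← hlaw i, integral_map (hpairmeas i).aemeasurable hF.aestronglyMeasurable]
    have hEZ : ∀ i, ∫ ω, Z i ω ∂P = ν j := by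
      intro i
      rw [hZdef]
      rw [hglam i g hgmeas, hν_def j]
      have hgeq : g = ({q : 𝒳 × ℝ | q.1 ∈ A j}).indicator (fun p => p.2) := by
        funext p
        by_cases hp : p.1 ∈ A j <;> simp [g, Set.indicator, hp]
      rw [hgeq, integral_indicator hsetmeas]
    -- variance bound for each Z i
    have hμA : (lam {q : 𝒳 × ℝ | q.1 ∈ A j}).toReal = m := by
      rw [hm, hμ, Measure.map_apply measurable_fst (hA j)]
      rfl
    have hVarZ : ∀ i, ProbabilityTheory.variance (Z i) P ≤ m := by
      intro i
      refine (ProbabilityTheory.variance_le_expectation_sq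
        (hZmeas i).aestronglyMeasurable).trans ?_
      show (∫ ω, ((Z i) ^ 2) ω ∂P) ≤ m
      have h1 : (∫ ω, ((Z i) ^ 2) ω ∂P) = ∫ p, (g p) ^ 2 ∂lam := by
        have h0 : (∫ ω, ((Z i) ^ 2) ω ∂P)
            = ∫ ω, (fun p => (g p) ^ 2) (Xdat i ω, Ydat i ω) ∂P := by
          simp [Z]
        rw [h0, hglam i _ (hgmeas.pow_const 2)]
      rw [h1]
      have hae : ∀ᵐ p ∂lam, (g p) ^ 2
          = ({q : 𝒳 × ℝ | q.1 ∈ A j}).indicator (fun _ => (1 : ℝ)) p := by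
        have hae1 : ∀ᵐ p ∂lam, p.2 = 1 ∨ p.2 = -1 := by
          rw [ae_iff]
          have hcompl : {p : 𝒳 × ℝ | ¬(p.2 = 1 ∨ p.2 = -1)}
              = {p : 𝒳 × ℝ | p.2 = 1 ∨ p.2 = -1}ᶜ := rfl
          rw [hcompl, prob_compl_eq_zero_iff hsY]
          exact hY
        filter_upwards [hae1] with p hp
        have hp2 : p.2 ^ 2 = 1 := by rcases hp with h | h <;> simp [h]
        by_cases hx : p.1 ∈ A j <;> simp [g, Set.indicator, hx, mul_pow, hp2]
      rw [integral_congr_ae hae, integral_indicator_const _ hsetmeas]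
      simp [measureReal_def, hμA]
    -- independence of the Z i
    have hindepZ : ProbabilityTheory.iIndepFun Z P :=
      hindep.comp (fun _ => g) (fun _ => hgmeas)
    -- the empirical average
    set S : Ω → ℝ := ∑ i, Z i with hSdef
    have hSℒp : MemLp S 2 P := memLp_finset_sum' _ (fun i _ => hZℒp i)
    set f : Ω → ℝ := fun ω => (n : ℝ)⁻¹ * S ω with hfdef
    have hfℒp : MemLp f 2 P := hSℒp.const_mul _
    have hES : ∫ ω, S ω ∂P = n * ν j := by
      have : ∫ ω, S ω ∂P = ∑ i, ∫ ω, Z i ω ∂P := by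
        rw [hSdef]
        have := integral_finset_sum (μ := P) Finset.univ
          (f := Z) (fun i _ => (hZℒp i).integrable one_le_two)
        simpa using this
      rw [this]
      simp [hEZ]
    have hEf : ∫ ω, f ω ∂P = ν j := by
      rw [hfdef]
      simp only [integral_const_mul, hES]
      field_simp
    have hVarS : ProbabilityTheory.variance S P ≤ n * m := by
      rw [hSdef, ProbabilityTheory.IndepFun.variance_sum (fun i _ => hZℒp i)
        (fun i _ i' _ hii' => hindepZ.indepFun hii')]
      calc ∑ i : Fin n, ProbabilityTheory.variance (Z i) P ≤ ∑ _i : Fin n, m :=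
            Finset.sum_le_sum (fun i _ => hVarZ i)
        _ = n * m := by simp [mul_comm]
    have hVarf : ProbabilityTheory.variance f P ≤ m / n := by
      have : ProbabilityTheory.variance f P
          = ((n : ℝ)⁻¹) ^ 2 * ProbabilityTheory.variance S P := by
        rw [hfdef]
        exact ProbabilityTheory.variance_const_mul _ _ _
      rw [this]
      calc ((n : ℝ)⁻¹) ^ 2 * ProbabilityTheory.variance S P
          ≤ ((n : ℝ)⁻¹) ^ 2 * (n * m) := by
            exact mul_le_mul_of_nonneg_left hVarS (by positivity)
        _ = m / n := by field_simp
    -- conclude per-cell bound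
    by_cases hν0 : ν j = 0
    · simp only [hν0, abs_zero, mul_zero]
      positivity
    have hc : 0 < |ν j| := abs_pos.2 hν0
    set c : ℝ := |ν j| with hcdef
    -- the event rewrites to the Chebyshev event
    have hset : {ω | |(n : ℝ)⁻¹ * (∑ i, Ydat i ω * (A j).indicator (fun _ => (1 : ℝ))
          (Xdat i ω)) - ν j| ≥ |ν j|}
        = {ω | c ≤ |f ω - (∫ a, f a ∂P)|} := by
      ext ω
      have hsum : (∑ i, Ydat i ω * (A j).indicator (fun _ => (1 : ℝ)) (Xdat i ω)) = S ω := by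
        rw [hSdef]
        simp [Z, g, mul_comm]
      simp only [Set.mem_setOf_eq, hsum, hEf, hfdef, ge_iff_le, hcdef]
      rw [show (∫ ω, (n:ℝ)⁻¹ * S ω ∂P) = ν j from hEf]
    have hcheb := ProbabilityTheory.meas_ge_le_variance_div_sq (μ := P) hfℒp hc
    have hPle : (P {ω | c ≤ |f ω - (∫ a, f a ∂P)|}).toReal
        ≤ ProbabilityTheory.variance f P / c ^ 2 := by
      refine ENNReal.toReal_le_of_le_ofReal ?_ hcheb
      have := ProbabilityTheory.variance_nonneg f P
      positivity
    have hP1 : (P {ω | c ≤ |f ω - (∫ a, f a ∂P)|}).toReal ≤ 1 := by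
      calc (P {ω | c ≤ |f ω - (∫ a, f a ∂P)|}).toReal ≤ (1 : ENNReal).toReal :=
            ENNReal.toReal_mono (by simp) prob_le_one
        _ = 1 := by simp
    rw [hset]
    -- now show P·c ≤ √m/√n
    have hsm : Real.sqrt m ^ 2 = m := Real.sq_sqrt hm0
    have hsn2 : Real.sqrt n ^ 2 = n := Real.sq_sqrt hn0.le
    have hsmpos : 0 ≤ Real.sqrt m := Real.sqrt_nonneg m
    rcases le_or_gt c (Real.sqrt m / Real.sqrt n) with hcase | hcase
    · calc (P {ω | c ≤ |f ω - (∫ a, f a ∂P)|}).toReal * c ≤ 1 * c :=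
            mul_le_mul_of_nonneg_right hP1 hc.le
        _ = c := one_mul c
        _ ≤ Real.sqrt m / Real.sqrt n := hcase
    · have h1 : (P {ω | c ≤ |f ω - (∫ a, f a ∂P)|}).toReal * c
          ≤ (ProbabilityTheory.variance f P / c ^ 2) * c :=
        mul_le_mul_of_nonneg_right hPle hc.le
      have h2 : (ProbabilityTheory.variance f P / c ^ 2) * c
          ≤ ((m / n) / c ^ 2) * c := by
        apply mul_le_mul_of_nonneg_right _ hc.le
        exact div_le_div_of_nonneg_right hVarf (by positivity)
      have h3 : ((m / n) / c ^ 2) * c = m / (n * c) := by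
        field_simp
      have h4 : m / (n * c) ≤ Real.sqrt m / Real.sqrt n := by
        rw [div_le_div_iff₀ (by positivity) hsn]
        -- m * √n ≤ √m * (n * c)
        have hlt : Real.sqrt m < c * Real.sqrt n := by
          rwa [div_lt_iff₀ hsn] at hcase
        have h := mul_le_mul_of_nonneg_left hlt.le (mul_nonneg hsmpos hsn.le)
        have e1 : m * Real.sqrt n = Real.sqrt m * Real.sqrt n * Real.sqrt m := by
          conv_lhs => rw [← hsm]
          ring
        have e2 : Real.sqrt m * ((n : ℝ) * c)
            = Real.sqrt m * Real.sqrt n * (c * Real.sqrt n) := by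
          conv_lhs => rw [← hsn2]
          ring
        rw [e1, e2]
        exact h
      calc (P {ω | c ≤ |f ω - (∫ a, f a ∂P)|}).toReal * c
          ≤ ((m / n) / c ^ 2) * c := h1.trans h2
        _ = m / (n * c) := h3
        _ ≤ Real.sqrt m / Real.sqrt n := h4
  constructor
  · calc (∑ j : Fin k,
        (P {ω | |(n : ℝ)⁻¹ * (∑ i, Ydat i ω * (A j).indicator (fun _ => (1 : ℝ)) (Xdat i ω))
            - ν j| ≥ |ν j|}).toReal * |ν j|)
        ≤ ∑ j : Fin k, Real.sqrt ((μ (A j)).toReal) / Real.sqrt n :=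
          Finset.sum_le_sum (fun j _ => key j)
      _ = (1 / Real.sqrt n) * ∑ j : Fin k, Real.sqrt ((μ (A j)).toReal) := by
          rw [Finset.mul_sum]
          congr 1
          funext j
          rw [one_div, div_eq_inv_mul]
  · -- Cauchy–Schwarz part
    have hμprob : IsProbabilityMeasure μ := by
      rw [hμ]; exact Measure.isProbabilityMeasure_map measurable_fst.aemeasurable
    have hsum1 : ∑ j : Fin k, (μ (A j)).toReal ≤ 1 := by
      have hU : (∑ j : Fin k, μ (A j)) = μ (⋃ j, A j) := by
        rw [measure_iUnion (fun i j hij => hdisj i j hij) hA, tsum_fintype]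
      have hle : (∑ j : Fin k, μ (A j)) ≤ 1 := hU ▸ prob_le_one
      calc ∑ j : Fin k, (μ (A j)).toReal = (∑ j : Fin k, μ (A j)).toReal :=
            (ENNReal.toReal_sum (fun j _ => measure_ne_top μ _)).symm
        _ ≤ (1 : ENNReal).toReal := ENNReal.toReal_mono (by simp) hle
        _ = 1 := by simp
    have hCS : ∑ j : Fin k, Real.sqrt ((μ (A j)).toReal) ≤ Real.sqrt k := by
      have h2 : (∑ j : Fin k, Real.sqrt ((μ (A j)).toReal)) ^ 2
          ≤ k * ∑ j : Fin k, (μ (A j)).toReal := by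
        have := sq_sum_le_card_mul_sum_sq (s := Finset.univ)
          (f := fun j : Fin k => Real.sqrt ((μ (A j)).toReal))
        simpa [Real.sq_sqrt (ENNReal.toReal_nonneg)] using this
      have h3 : (∑ j : Fin k, Real.sqrt ((μ (A j)).toReal)) ^ 2 ≤ k := by
        refine h2.trans ?_
        calc (k : ℝ) * ∑ j : Fin k, (μ (A j)).toReal ≤ k * 1 :=
              mul_le_mul_of_nonneg_left hsum1 (by positivity)
          _ = k := mul_one _
      exact (Real.le_sqrt (Finset.sum_nonneg fun j _ => Real.sqrt_nonneg _)
        (by positivity)).2 h3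
    calc (1 / Real.sqrt n) * (∑ j : Fin k, Real.sqrt ((μ (A j)).toReal))
        ≤ (1 / Real.sqrt n) * Real.sqrt k :=
          mul_le_mul_of_nonneg_left hCS (by positivity)
      _ = Real.sqrt (k / n) := by
          rw [Real.sqrt_div (by positivity), one_div, inv_mul_eq_div]
end

section
/- Let (ε_{i,j})_{i ≥ 1, j ≥ 1} be a doubly indexed family of i.i.d. standard Laplace random variables and let (k_n)_{n ≥ 1} be positive integers with k_n ≥ 2 for all n and k_n/√n → 0 as n → ∞. Then Σ_{j=1}^{k_n} | (1/n) Σ_{i=1}^n ε_{i,j} | → 0 almost surely as n → ∞. -/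
open MeasureTheory Set Filter

/-- The standard Laplace distribution on `ℝ` (centred, unit variance), with density
`x ↦ (1/√2) e^{−√2|x|}` with respect to Lebesgue measure. -/
noncomputable def stdLaplace : Measure ℝ :=
  volume.withDensity fun x => ENNReal.ofReal ((Real.sqrt 2)⁻¹ * Real.exp (-(Real.sqrt 2 * |x|)))

open Real ProbabilityTheory
open scoped ENNReal NNReal
set_option maxHeartbeats 1000000

lemma int_Iic' {b : ℝ} (hb : 0 < b) : IntegrableOn (fun x : ℝ => Real.exp (b * x)) (Iic 0) := by
  have A : MeasurableEmbedding fun x : ℝ => -x :=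
    (Homeomorph.neg ℝ).isClosedEmbedding.measurableEmbedding
  have h := A.integrableOn_map_iff (f := fun x : ℝ => Real.exp (b * x)) (s := Iic (0:ℝ)) (μ := volume)
  rw [Measure.map_neg_eq_self (volume : Measure ℝ)] at h
  rw [h, show (fun x : ℝ => -x) ⁻¹' Iic (0:ℝ) = Ici (0:ℝ) by ext x; simp,
    integrableOn_Ici_iff_integrableOn_Ioi]
  have h2 : ((fun x : ℝ => Real.exp (b*x)) ∘ fun x : ℝ => -x) = fun x : ℝ => Real.exp (-b*x) := by
    ext x; simp [mul_neg, neg_mul]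
  rw [h2]
  exact exp_neg_integrableOn_Ioi 0 hb

lemma intval_Iic' {b : ℝ} (hb : 0 < b) : (∫ x in Iic (0:ℝ), Real.exp (b * x)) = b⁻¹ := by
  have h0 : (∫ x in Iic (0:ℝ), Real.exp (b * x)) = ∫ x in Iic (0:ℝ), (fun y => Real.exp (-(b*y))) (-x) := by
    congr 1; ext x; simp [mul_neg]
  rw [h0, integral_comp_neg_Iic 0 (fun y => Real.exp (-(b*y))), neg_zero]
  have := integral_comp_mul_left_Ioi (fun y => Real.exp (-y)) 0 hb
  simp only [mul_zero] at this
  calc (∫ x in Ioi (0:ℝ), Real.exp (-(b * x))) = b⁻¹ • ∫ x in Ioi (0:ℝ), Real.exp (-x) := this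
  _ = b⁻¹ := by rw [integral_exp_neg_Ioi_zero]; simp

lemma int_Ioi' {b : ℝ} (hb : 0 < b) : IntegrableOn (fun x : ℝ => Real.exp (-b * x)) (Ioi 0) :=
  exp_neg_integrableOn_Ioi 0 hb

lemma intval_Ioi' {b : ℝ} (hb : 0 < b) : (∫ x in Ioi (0:ℝ), Real.exp (-b * x)) = b⁻¹ := by
  have := integral_comp_mul_left_Ioi (fun y => Real.exp (-y)) 0 hb
  simp only [mul_zero] at this
  simp_rw [neg_mul]
  calc (∫ x in Ioi (0:ℝ), Real.exp (-(b * x))) = b⁻¹ • ∫ x in Ioi (0:ℝ), Real.exp (-x) := this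
  _ = b⁻¹ := by rw [integral_exp_neg_Ioi_zero]; simp

lemma laplace_exp_int {u : ℝ} (hu : |u| ≤ 1) :
    Integrable (fun x => Real.exp (u * x)) stdLaplace ∧
      (∫ x, Real.exp (u * x) ∂stdLaplace) = 2 / (2 - u^2) := by
  have h1lt : (1:ℝ) < Real.sqrt 2 := by
    rw [show (1:ℝ) = Real.sqrt 1 by simp]
    exact Real.sqrt_lt_sqrt (by norm_num) (by norm_num)
  obtain ⟨hu1, hu2⟩ := abs_le.mp hu
  have hbm : 0 < Real.sqrt 2 - u := by linarith
  have hbp : 0 < Real.sqrt 2 + u := by linarith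
  set D : ℝ → ℝ := fun x => (Real.sqrt 2)⁻¹ * Real.exp (-(Real.sqrt 2 * |x|)) with hD
  have hDnn : ∀ x, 0 ≤ D x := fun x => by positivity
  have hDmeas : Measurable D := by measurability
  set H : ℝ → ℝ := fun x => Real.exp (u * x) * D x with hH
  -- piecewise description
  have hIoi : EqOn H (fun x => (Real.sqrt 2)⁻¹ * Real.exp (-(Real.sqrt 2 - u) * x)) (Ioi 0) := by
    intro x hx
    have : |x| = x := abs_of_pos hx
    simp only [hH, hD, this]
    rw [show Real.exp (u*x) * ((Real.sqrt 2)⁻¹ * Real.exp (-(Real.sqrt 2*x))) = (Real.sqrt 2)⁻¹ * (Real.exp (u*x) * Real.exp (-(Real.sqrt 2*x))) by ring, ← Real.exp_add]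
    ring_nf
  have hIic : EqOn H (fun x => (Real.sqrt 2)⁻¹ * Real.exp ((Real.sqrt 2 + u) * x)) (Iic 0) := by
    intro x hx
    have : |x| = -x := abs_of_nonpos hx
    simp only [hH, hD, this]
    rw [show Real.exp (u*x) * ((Real.sqrt 2)⁻¹ * Real.exp (-(Real.sqrt 2*(-x)))) = (Real.sqrt 2)⁻¹ * (Real.exp (u*x) * Real.exp (-(Real.sqrt 2*(-x)))) by ring, ← Real.exp_add]
    ring_nf
  have hion : IntegrableOn H (Ioi 0) :=
    IntegrableOn.congr_fun ((int_Ioi' hbm).const_mul ((Real.sqrt 2):ℝ)⁻¹) (fun x hx => (hIoi hx).symm) measurableSet_Ioi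
  have hiic : IntegrableOn H (Iic 0) :=
    IntegrableOn.congr_fun ((int_Iic' hbp).const_mul ((Real.sqrt 2):ℝ)⁻¹) (fun x hx => (hIic hx).symm) measurableSet_Iic
  have hHint : Integrable H := by
    rw [← integrableOn_univ, ← Set.Iic_union_Ioi (a := (0:ℝ))]
    exact hiic.union hion
  have hval : ∫ x, H x = 2 / (2 - u^2) := by
    rw [← intervalIntegral.integral_Iic_add_Ioi (b := (0:ℝ)) hiic hion]
    have v1 : ∫ x in Iic (0:ℝ), H x = (Real.sqrt 2)⁻¹ * (Real.sqrt 2 + u)⁻¹ := by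
      rw [setIntegral_congr_fun measurableSet_Iic hIic, integral_const_mul, intval_Iic' hbp]
    have v2 : ∫ x in Ioi (0:ℝ), H x = (Real.sqrt 2)⁻¹ * (Real.sqrt 2 - u)⁻¹ := by
      rw [setIntegral_congr_fun measurableSet_Ioi hIoi, integral_const_mul, intval_Ioi' hbm]
    rw [v1, v2]
    have h2 : Real.sqrt 2 * Real.sqrt 2 = 2 := Real.mul_self_sqrt (by norm_num)
    have hu2' : 2 - u^2 = (Real.sqrt 2 - u) * (Real.sqrt 2 + u) := by ring_nf; nlinarith [h2]
    rw [hu2']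
    field_simp
    ring_nf
  -- transfer through withDensity
  have hmeas' : Measurable fun x => ENNReal.ofReal (D x) := hDmeas.ennreal_ofReal
  have hsd : stdLaplace = volume.withDensity fun x => ENNReal.ofReal (D x) := rfl
  constructor
  · rw [hsd, integrable_withDensity_iff hmeas' (Filter.Eventually.of_forall fun x => ENNReal.ofReal_lt_top)]
    refine hHint.congr (Filter.Eventually.of_forall fun x => ?_)
    simp only [hH, ENNReal.toReal_ofReal (hDnn x)]
  · rw [hsd]
    rw [show (fun x => ENNReal.ofReal (D x)) = (fun x => ((D x).toNNReal : ℝ≥0∞)) from rfl,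
      integral_withDensity_eq_integral_smul hDmeas.real_toNNReal]
    rw [← hval]
    congr 1; ext x
    simp only [NNReal.smul_def, smul_eq_mul, Real.coe_toNNReal _ (hDnn x), hH]
    ring

lemma laplace_mgf_eq {Ω : Type*} [MeasurableSpace Ω] (P : Measure Ω) (X : Ω → ℝ)
    (hX : Measurable X) (hl : P.map X = stdLaplace) {u : ℝ} (hu : |u| ≤ 1) :
    mgf X P u = 2 / (2 - u^2) ∧ Integrable (fun ω => Real.exp (u * X ω)) P := by
  have hg : AEStronglyMeasurable (fun x => Real.exp (u * x)) (P.map X) :=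
    (Real.continuous_exp.comp (continuous_const.mul continuous_id)).aestronglyMeasurable
  constructor
  · rw [mgf, ← integral_map hX.aemeasurable hg, hl]
    exact (laplace_exp_int hu).2
  · have h := (integrable_map_measure hg hX.aemeasurable).mp (hl ▸ (laplace_exp_int hu).1)
    exact h

lemma tail_bound {Ω : Type*} [MeasurableSpace Ω] (P : Measure Ω) [IsProbabilityMeasure P]
    (ε : ℕ × ℕ → Ω → ℝ) (hmeas : ∀ p, Measurable (ε p))
    (hlaw : ∀ p, P.map (ε p) = stdLaplace)
    (hindep : ProbabilityTheory.iIndepFun ε P)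
    (n K : ℕ) (hn : 1 ≤ n) (t : ℝ) :
    (P {ω | (n:ℝ) * t ≤ ∑ j ∈ Finset.range K, |∑ i ∈ Finset.range n, ε (i, j) ω|}).toReal
      ≤ Real.exp (-Real.sqrt n * t) * 4 ^ K := by
  classical
  set s : ℝ := (Real.sqrt n)⁻¹ with hs_def
  have hn0 : (0:ℝ) < n := by exact_mod_cast hn
  have hn1 : (1:ℝ) ≤ n := by exact_mod_cast hn
  have hsq_pos : 0 < Real.sqrt n := Real.sqrt_pos.mpr hn0
  have hsq1 : 1 ≤ Real.sqrt n := by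
    rw [show (1:ℝ) = Real.sqrt 1 by simp]
    exact Real.sqrt_le_sqrt (by exact_mod_cast hn)
  have hs0 : 0 ≤ s := inv_nonneg.mpr hsq_pos.le
  have hs1 : s ≤ 1 := inv_le_one_of_one_le₀ hsq1
  have hs2 : s^2 = (n:ℝ)⁻¹ := by
    rw [hs_def, inv_pow, Real.sq_sqrt hn0.le]
  -- basic objects
  set S : ℕ → Ω → ℝ := fun j ω => ∑ i ∈ Finset.range n, ε (i, j) ω with hS_def
  set X : Ω → ℝ := fun ω => ∑ j ∈ Finset.range K, |S j ω| with hX_def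
  have hSmeas : ∀ j, Measurable (S j) := fun j =>
    Finset.measurable_sum _ fun i _ => hmeas (i, j)
  have hXmeas : Measurable X :=
    Finset.measurable_sum _ fun j _ => (hSmeas j).abs
  set A : Finset (ℕ × ℕ) := Finset.range n ×ˢ Finset.range K with hA_def
  set c : Finset ℕ → ℕ → ℝ := fun T j => if j ∈ T then 1 else -1 with hc_def
  have hc1 : ∀ T j, |c T j| = 1 := by
    intro T j; simp only [hc_def]; split <;> simp
  set Z : Finset ℕ → ℕ × ℕ → Ω → ℝ := fun T p ω => c T p.2 * ε p ω with hZ_def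
  have hZmeas : ∀ T p, Measurable (Z T p) := fun T p => (hmeas p).const_mul _
  have hZindep : ∀ T, iIndepFun (Z T) P := by
    intro T
    exact hindep.comp (fun p x => c T p.2 * x) (fun p => (measurable_id.const_mul _))
  have habs : ∀ T (p : ℕ × ℕ), |s * c T p.2| ≤ 1 := by
    intro T p; rw [abs_mul, hc1, mul_one, abs_of_nonneg hs0]; exact hs1
  have hZrw : ∀ T (p : ℕ × ℕ), (fun ω => Real.exp (s * Z T p ω)) =
      fun ω => Real.exp ((s * c T p.2) * ε p ω) := by
    intro T p; funext ω; simp only [hZ_def]; ring_nf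
  have hZint : ∀ T (p : ℕ × ℕ), Integrable (fun ω => Real.exp (s * Z T p ω)) P := by
    intro T p; rw [hZrw T p]
    exact (laplace_mgf_eq P (ε p) (hmeas p) (hlaw p) (habs T p)).2
  have hmgfZ : ∀ T (p : ℕ × ℕ), mgf (Z T p) P s = 2 / (2 - s^2) := by
    intro T p
    have h1 : mgf (Z T p) P s = ∫ ω, Real.exp (s * Z T p ω) ∂P := rfl
    have h2 : mgf (ε p) P (s * c T p.2) = ∫ ω, Real.exp ((s * c T p.2) * ε p ω) ∂P := rfl
    have : mgf (Z T p) P s = mgf (ε p) P (s * c T p.2) := by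
      rw [h1, h2, hZrw T p]
    rw [this, (laplace_mgf_eq P (ε p) (hmeas p) (hlaw p) (habs T p)).1]
    congr 2
    rw [mul_pow, show (c T p.2)^2 = 1 by rw [← sq_abs, hc1]; norm_num, mul_one]
  set Y : Finset ℕ → Ω → ℝ := fun T => ∑ p ∈ A, Z T p with hY_def
  have hYmgf : ∀ T, mgf (Y T) P s = (2 / (2 - s^2)) ^ (n * K) := by
    intro T
    rw [hY_def, (hZindep T).mgf_sum (hZmeas T) A]
    rw [Finset.prod_congr rfl fun p _ => hmgfZ T p, Finset.prod_const, hA_def,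
      Finset.card_product, Finset.card_range, Finset.card_range]
  have hYint : ∀ T, Integrable (fun ω => Real.exp (s * (Y T) ω)) P := fun T =>
    (hZindep T).integrable_exp_mul_sum (hZmeas T) (fun p _ => hZint T p)
  -- the Y representation
  have hYrep : ∀ T, T ⊆ Finset.range K → ∀ ω,
      Y T ω = (∑ j ∈ T, S j ω) - ∑ j ∈ Finset.range K \ T, S j ω := by
    intro T hT ω
    simp only [hY_def, Finset.sum_apply, hZ_def, hA_def]
    rw [Finset.sum_product]
    rw [Finset.sum_comm]
    have : ∀ j ∈ Finset.range K, (∑ i ∈ Finset.range n, c T j * ε (i, j) ω) = c T j * S j ω := by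
      intro j _; rw [hS_def, Finset.mul_sum]
    rw [Finset.sum_congr rfl this, ← Finset.sum_sdiff hT]
    have h1 : ∀ j ∈ Finset.range K \ T, c T j * S j ω = -(S j ω) := by
      intro j hj; simp only [Finset.mem_sdiff] at hj
      simp only [hc_def]; rw [if_neg hj.2]; ring
    have h2 : ∀ j ∈ T, c T j * S j ω = S j ω := by
      intro j hj; simp only [hc_def]; rw [if_pos hj]; ring
    rw [Finset.sum_congr rfl h1, Finset.sum_congr rfl h2, Finset.sum_neg_distrib]
    ring
  -- pointwise bound
  have hpt : ∀ ω, Real.exp (s * X ω) ≤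
      ∑ T ∈ (Finset.range K).powerset, Real.exp (s * Y T ω) := by
    intro ω
    have e1 : Real.exp (s * X ω) = ∏ j ∈ Finset.range K, Real.exp (s * |S j ω|) := by
      rw [hX_def, Finset.mul_sum, Real.exp_sum]
    have e2 : ∀ j ∈ Finset.range K,
        Real.exp (s * |S j ω|) ≤ Real.exp (s * S j ω) + Real.exp (-(s * S j ω)) := by
      intro j _
      rcases le_total 0 (S j ω) with h | h
      · rw [abs_of_nonneg h]; exact le_add_of_nonneg_right (Real.exp_pos _).le
      · rw [abs_of_nonpos h, mul_neg]; exact le_add_of_nonneg_left (Real.exp_pos _).le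
    calc Real.exp (s * X ω) = ∏ j ∈ Finset.range K, Real.exp (s * |S j ω|) := e1
      _ ≤ ∏ j ∈ Finset.range K, (Real.exp (s * S j ω) + Real.exp (-(s * S j ω))) :=
          Finset.prod_le_prod (fun j _ => (Real.exp_pos _).le) e2
      _ = ∑ T ∈ (Finset.range K).powerset,
            (∏ j ∈ T, Real.exp (s * S j ω)) *
              ∏ j ∈ Finset.range K \ T, Real.exp (-(s * S j ω)) := Finset.prod_add _ _ _
      _ = ∑ T ∈ (Finset.range K).powerset, Real.exp (s * Y T ω) := by
          refine Finset.sum_congr rfl fun T hT => ?_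
          have hT' : T ⊆ Finset.range K := Finset.mem_powerset.mp hT
          rw [← Real.exp_sum, ← Real.exp_sum, ← Real.exp_add, hYrep T hT' ω]
          congr 1
          have hdist : s * (∑ j ∈ T, S j ω - ∑ j ∈ Finset.range K \ T, S j ω)
              = ∑ j ∈ T, s * S j ω - ∑ j ∈ Finset.range K \ T, s * S j ω := by
            rw [mul_sub, Finset.mul_sum, Finset.mul_sum]
          rw [hdist, Finset.sum_neg_distrib, ← sub_eq_add_neg]
  have hGint : Integrable (fun ω => ∑ T ∈ (Finset.range K).powerset, Real.exp (s * Y T ω)) P :=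
    integrable_finset_sum _ (fun T _ => hYint T)
  have hXint : Integrable (fun ω => Real.exp (s * X ω)) P := by
    refine hGint.mono ((hXmeas.const_mul s).exp.aestronglyMeasurable) (ae_of_all _ fun ω => ?_)
    rw [Real.norm_eq_abs, abs_of_nonneg (Real.exp_pos _).le, Real.norm_eq_abs,
      abs_of_nonneg (Finset.sum_nonneg fun T _ => (Real.exp_pos _).le)]
    exact hpt ω
  have hmgfX : mgf X P s ≤ ((2:ℝ)^K) * (2 / (2 - s^2)) ^ (n*K) := by
    have h1 : mgf X P s ≤ ∫ ω, ∑ T ∈ (Finset.range K).powerset, Real.exp (s * Y T ω) ∂P :=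
      integral_mono hXint hGint hpt
    rw [integral_finset_sum _ (fun T _ => hYint T)] at h1
    have h2 : ∀ T ∈ (Finset.range K).powerset,
        (∫ ω, Real.exp (s * Y T ω) ∂P) = (2 / (2 - s^2)) ^ (n*K) := fun T _ => hYmgf T
    rw [Finset.sum_congr rfl h2, Finset.sum_const, Finset.card_powerset, Finset.card_range,
      nsmul_eq_mul] at h1
    calc mgf X P s ≤ ((2^K : ℕ) : ℝ) * (2/(2-s^2))^(n*K) := h1
      _ = ((2:ℝ)^K) * (2/(2-s^2))^(n*K) := by push_cast; ring
  have hcher := measure_ge_le_exp_mul_mgf (X := X) (μ := P) ((n:ℝ)*t) hs0 hXint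
  -- numerics
  have hninv : ((n:ℝ))⁻¹ ≤ 1 := by
    rw [inv_le_one_iff₀]; right; exact_mod_cast hn
  have hbase_pos : (0:ℝ) < 2 - s^2 := by rw [hs2]; linarith
  have hbase_nonneg : (0:ℝ) ≤ 2 / (2 - s^2) := by positivity
  have hLn : (2 / (2 - s^2)) ^ n ≤ 2 := by
    have h2n : (0:ℝ) < 2*(n:ℝ) := by linarith
    have hrw : 2 / (2 - s^2) = (1 - (2*(n:ℝ))⁻¹)⁻¹ := by
      rw [hs2]
      rw [eq_comm, inv_eq_iff_eq_inv, eq_comm]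
      have hne : (n:ℝ) ≠ 0 := ne_of_gt hn0
      field_simp
    have hbern : (1:ℝ)/2 ≤ (1 - (2*(n:ℝ))⁻¹)^n := by
      have hge : (-2:ℝ) ≤ -(2*(n:ℝ))⁻¹ := by
        have h1 : (2*(n:ℝ))⁻¹ ≤ 1 := by
          rw [inv_le_one_iff₀]; right; linarith
        have h2 : (0:ℝ) < (2*(n:ℝ))⁻¹ := by positivity
        linarith
      have h := one_add_mul_le_pow hge n
      have heq : (1:ℝ) + (n:ℕ) * (-(2*(n:ℝ))⁻¹) = 1/2 := by
        field_simp
        ring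
      rw [show (1:ℝ) + (-(2*(n:ℝ))⁻¹) = 1 - (2*(n:ℝ))⁻¹ by ring] at h
      linarith
    have hpow_pos : (0:ℝ) < (1 - (2*(n:ℝ))⁻¹)^n := lt_of_lt_of_le (by norm_num) hbern
    rw [hrw, inv_pow]
    calc ((1 - (2*(n:ℝ))⁻¹)^n)⁻¹ ≤ ((1:ℝ)/2)⁻¹ :=
        (inv_le_inv₀ hpow_pos (by norm_num)).mpr hbern
      _ = 2 := by norm_num
  have hLnK : (2 / (2 - s^2)) ^ (n*K) ≤ 2^K := by
    rw [pow_mul]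
    exact pow_le_pow_left₀ (pow_nonneg hbase_nonneg n) hLn K
  have hmgf4 : mgf X P s ≤ (4:ℝ)^K := by
    calc mgf X P s ≤ ((2:ℝ)^K) * (2/(2-s^2))^(n*K) := hmgfX
      _ ≤ ((2:ℝ)^K) * 2^K := by
          exact mul_le_mul_of_nonneg_left hLnK (by positivity)
      _ = 4^K := by rw [← mul_pow]; norm_num
  have hsn : s * (n:ℝ) = Real.sqrt n := by
    rw [hs_def, inv_mul_eq_div, eq_comm, eq_div_iff (by positivity)]
    exact Real.mul_self_sqrt hn0.le
  calc (P {ω | (n:ℝ) * t ≤ X ω}).toReal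
      ≤ Real.exp (-s * ((n:ℝ)*t)) * mgf X P s := hcher
    _ ≤ Real.exp (-s * ((n:ℝ)*t)) * (4:ℝ)^K :=
        mul_le_mul_of_nonneg_left hmgf4 (Real.exp_pos _).le
    _ = Real.exp (-Real.sqrt n * t) * 4 ^ K := by
        rw [show -s * ((n:ℝ)*t) = -(s*(n:ℝ))*t by ring, hsn]

lemma summable_exp_neg_sqrt {a : ℝ} (ha : 0 < a) :
    Summable (fun n : ℕ => Real.exp (-a * Real.sqrt n)) := by
  rw [← summable_nat_add_iff 1]
  have hsum : Summable (fun n : ℕ => 24 * (a^4)⁻¹ * (((n+1:ℕ):ℝ)^2)⁻¹) := by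
    apply Summable.mul_left
    have h := (summable_nat_add_iff (f := fun n : ℕ => (((n:ℕ):ℝ)^2)⁻¹) 1).mpr ?_
    · exact h
    · have := Real.summable_one_div_nat_pow.mpr (le_refl 2)
      simpa [one_div] using this
  apply Summable.of_nonneg_of_le (fun n => (Real.exp_pos _).le) ?_ hsum
  intro n
  set m : ℕ := n + 1
  have hm1 : (1:ℝ) ≤ m := by exact_mod_cast Nat.one_le_iff_ne_zero.mpr (Nat.succ_ne_zero n)
  have hm0 : (0:ℝ) < m := by linarith
  have hx0 : 0 ≤ a * Real.sqrt m := by positivity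
  have hq : (a * Real.sqrt m)^4 / 24 ≤ Real.exp (a * Real.sqrt m) := by
    have h5 := Real.sum_le_exp_of_nonneg hx0 5
    have hterm : (a * Real.sqrt m)^4 / 24 ≤ ∑ i ∈ Finset.range 5, (a * Real.sqrt m)^i / (Nat.factorial i) := by
      have : ((4:ℕ) ∈ Finset.range 5) := by norm_num
      calc (a * Real.sqrt m)^4 / 24 = (a * Real.sqrt m)^4 / (Nat.factorial 4) := by norm_num [Nat.factorial]
        _ ≤ _ := Finset.single_le_sum (f := fun i => (a * Real.sqrt m)^i / (Nat.factorial i))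
            (fun i _ => by positivity) this
    linarith
  have hsq4 : (Real.sqrt m)^4 = (m:ℝ)^2 := by
    rw [show 4 = 2*2 from rfl, pow_mul, Real.sq_sqrt hm0.le]
  have hpos4 : (0:ℝ) < (a * Real.sqrt m)^4 / 24 := by
    have : (0:ℝ) < Real.sqrt m := Real.sqrt_pos.mpr hm0
    positivity
  have : Real.exp (-a * Real.sqrt m) ≤ ((a * Real.sqrt m)^4 / 24)⁻¹ := by
    rw [show -a * Real.sqrt m = -(a * Real.sqrt m) by ring, Real.exp_neg]
    exact inv_anti₀ hpos4 hq
  calc Real.exp (-a * Real.sqrt ((n+1:ℕ):ℝ)) ≤ ((a * Real.sqrt m)^4 / 24)⁻¹ := this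
    _ = 24 * (a^4)⁻¹ * (((m:ℕ):ℝ)^2)⁻¹ := by
        rw [mul_pow, hsq4]
        field_simp
    _ = 24 * (a^4)⁻¹ * (((n+1:ℕ):ℝ)^2)⁻¹ := rfl

/-- If `(ε_{i,j})_{i,j ≥ 1}` is a doubly indexed i.i.d. family of standard
Laplace random variables and `(k_n)` are integers with `k_n ≥ 2` and `k_n/√n → 0`, then
`Σ_{j=1}^{k_n} |(1/n) Σ_{i=1}^n ε_{i,j}| → 0` almost surely. -/
theorem laplace_array_strong_law
    {Ω : Type*} [MeasurableSpace Ω] (P : Measure Ω) [IsProbabilityMeasure P]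
    (ε : ℕ × ℕ → Ω → ℝ) (hmeas : ∀ p, Measurable (ε p))
    (hlaw : ∀ p, P.map (ε p) = stdLaplace)
    (hindep : ProbabilityTheory.iIndepFun ε P)
    (k : ℕ → ℕ) (hk : ∀ n, 2 ≤ k n)
    (hk_sqrt : Tendsto (fun n : ℕ => (k n : ℝ) / Real.sqrt n) atTop (nhds 0)) :
    ∀ᵐ ω ∂P, Tendsto
      (fun n : ℕ => ∑ j ∈ Finset.range (k n), |(n : ℝ)⁻¹ * ∑ i ∈ Finset.range n, ε (i, j) ω|)
      atTop (nhds 0) := by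
  set F : ℕ → Ω → ℝ := fun n ω =>
    ∑ j ∈ Finset.range (k n), |(n : ℝ)⁻¹ * ∑ i ∈ Finset.range n, ε (i, j) ω| with hF_def
  suffices h : ∀ m : ℕ, ∀ᵐ ω ∂P, ∀ᶠ n in atTop, F n ω < 1/(m+1) by
    rw [← ae_all_iff] at h
    filter_upwards [h] with ω hω
    rw [NormedAddCommGroup.tendsto_nhds_zero]
    intro δ hδ
    obtain ⟨m, hm⟩ := exists_nat_one_div_lt hδ
    filter_upwards [hω m] with n hn
    have hFnn : 0 ≤ F n ω := Finset.sum_nonneg fun j _ => abs_nonneg _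
    rw [Real.norm_eq_abs, abs_of_nonneg hFnn]
    exact lt_trans hn hm
  intro m
  set t : ℝ := 1/(m+1) with ht_def
  have ht : 0 < t := by positivity
  set E : ℕ → Set Ω := fun n => {ω | t ≤ F n ω} with hE_def
  suffices hsum : (∑' n, P (E n)) ≠ ∞ by
    have hbc := MeasureTheory.ae_eventually_notMem hsum
    filter_upwards [hbc] with ω hω
    filter_upwards [hω] with n hn
    exact lt_of_not_ge hn
  -- tail bound transfer for n ≥ 1
  have key : ∀ n, 1 ≤ n →
      P (E n) ≤ ENNReal.ofReal (Real.exp (-Real.sqrt n * t) * 4 ^ (k n)) := by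
    intro n hn
    have hn0 : (0:ℝ) < n := by exact_mod_cast hn
    have hsub : E n ⊆ {ω | (n:ℝ)*t ≤
        ∑ j ∈ Finset.range (k n), |∑ i ∈ Finset.range n, ε (i,j) ω|} := by
      intro ω hω
      simp only [hE_def, Set.mem_setOf_eq] at hω ⊢
      have hF : F n ω = (n:ℝ)⁻¹ *
          ∑ j ∈ Finset.range (k n), |∑ i ∈ Finset.range n, ε (i,j) ω| := by
        rw [hF_def, Finset.mul_sum]
        refine Finset.sum_congr rfl fun j _ => ?_
        rw [abs_mul, abs_of_nonneg (inv_nonneg.mpr hn0.le)]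
      rw [hF] at hω
      have h2 := mul_le_mul_of_nonneg_left hω hn0.le
      rwa [← mul_assoc, mul_inv_cancel₀ (ne_of_gt hn0), one_mul] at h2
    calc P (E n) ≤ P {ω | (n:ℝ)*t ≤
          ∑ j ∈ Finset.range (k n), |∑ i ∈ Finset.range n, ε (i,j) ω|} := measure_mono hsub
      _ = ENNReal.ofReal ((P {ω | (n:ℝ)*t ≤
          ∑ j ∈ Finset.range (k n), |∑ i ∈ Finset.range n, ε (i,j) ω|}).toReal) :=
          (ENNReal.ofReal_toReal (measure_ne_top _ _)).symm
      _ ≤ ENNReal.ofReal (Real.exp (-Real.sqrt n * t) * 4 ^ (k n)) :=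
          ENNReal.ofReal_le_ofReal (tail_bound P ε hmeas hlaw hindep n (k n) hn t)
  have hlog : (0:ℝ) < Real.log 4 := Real.log_pos (by norm_num)
  have hev : ∀ᶠ n : ℕ in atTop, (k n : ℝ)/Real.sqrt n < t/(2*Real.log 4) := by
    have : (0:ℝ) < t/(2*Real.log 4) := by positivity
    exact hk_sqrt.eventually_lt_const this
  obtain ⟨N0, hN0⟩ := eventually_atTop.mp hev
  set N : ℕ := max N0 1 with hN_def
  have hbound : ∀ n, N ≤ n →
      Real.exp (-Real.sqrt n * t) * 4 ^ (k n) ≤ Real.exp (-(t/2) * Real.sqrt n) := by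
    intro n hn
    have hn1 : 1 ≤ n := le_trans (le_max_right _ _) hn
    have hsq_pos : (0:ℝ) < Real.sqrt n := Real.sqrt_pos.mpr (by exact_mod_cast hn1)
    have hdiv := hN0 n (le_trans (le_max_left _ _) hn)
    have hk4 : (k n : ℝ) * Real.log 4 ≤ (t/2) * Real.sqrt n := by
      rw [div_lt_iff₀ hsq_pos] at hdiv
      have h1 := mul_le_mul_of_nonneg_right hdiv.le hlog.le
      calc (k n:ℝ) * Real.log 4 ≤ (t/(2*Real.log 4) * Real.sqrt n) * Real.log 4 := h1
        _ = (t/2) * Real.sqrt n := by field_simp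
    have h4 : ((4:ℝ))^(k n) = Real.exp ((k n) * Real.log 4) := by
      conv_lhs => rw [← Real.exp_log (show (0:ℝ) < 4 by norm_num)]
      rw [← Real.exp_nat_mul]
    rw [h4, ← Real.exp_add]
    apply Real.exp_le_exp.mpr
    linarith
  -- summable majorant
  set g : ℕ → ℝ := fun n => if n < N then 1 else Real.exp (-(t/2) * Real.sqrt n) with hg_def
  have hg_nonneg : ∀ n, 0 ≤ g n := by
    intro n; rw [hg_def]; dsimp only; split
    · norm_num
    · positivity
  have hg_summable : Summable g := by
    rw [← summable_nat_add_iff N]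
    have : ∀ n : ℕ, g (n + N) = Real.exp (-(t/2) * Real.sqrt (n + N)) := by
      intro n; rw [hg_def]; dsimp only
      rw [if_neg (by omega)]
      norm_num
    rw [funext this]
    apply Summable.of_nonneg_of_le (fun n => (Real.exp_pos _).le) ?_
      (summable_exp_neg_sqrt (a := t/2) (by positivity))
    intro n
    apply Real.exp_le_exp.mpr
    have hmono : Real.sqrt n ≤ Real.sqrt (n + N) := by
      apply Real.sqrt_le_sqrt; push_cast; linarith
    nlinarith [ht]
  have hPle : ∀ n, P (E n) ≤ ENNReal.ofReal (g n) := by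
    intro n
    rw [hg_def]; dsimp only; split
    · rename_i h
      calc P (E n) ≤ 1 := prob_le_one
        _ = ENNReal.ofReal 1 := by norm_num
    · rename_i h
      have hn1 : 1 ≤ n := by omega
      refine (key n hn1).trans (ENNReal.ofReal_le_ofReal ?_)
      exact hbound n (by omega)
  have hfin : (∑' n, P (E n)) < ∞ := by
    calc (∑' n, P (E n)) ≤ ∑' n, ENNReal.ofReal (g n) := ENNReal.tsum_le_tsum hPle
      _ = ENNReal.ofReal (∑' n, g n) := (ENNReal.ofReal_tsum_of_nonneg hg_nonneg hg_summable).symm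
      _ < ∞ := ENNReal.ofReal_lt_top
  exact hfin.ne
end

section
/- Let (X_1, Y_1), …, (X_n, Y_n) be i.i.d. copies of a random pair (X, Y), where X takes values in a measurable space 𝒳 with distribution μ and Y takes values in {−1, +1}, let A_1, …, A_k be pairwise disjoint measurable subsets of 𝒳, let σ_Z > 0, and let (ε_{i,j})_{1 ≤ i ≤ n, 1 ≤ j ≤ k} be i.i.d. standard Laplace random variables independent of the sample. With ν(A_j) = E[Y·1{X ∈ A_j}] and ν̃_n(A_j) = (1/n) Σ_{i=1}^n ( Y_i·1{X_i ∈ A_j} + σ_Z ε_{i,j} ), one has Σ_{j=1}^k P(|ν̃_n(A_j) − ν(A_j)| ≥ |ν(A_j)|)·|ν(A_j)| ≤ (1/√n) Σ_{j=1}^k √(σ_Z² + μ(A_j)) ≤ (k/√n)·√(σ_Z² + 1/k). -/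
open MeasureTheory Set

namespace Lap
open scoped ENNReal NNReal
open Real

noncomputable def dens (x : ℝ) : ℝ := (Real.sqrt 2)⁻¹ * Real.exp (-(Real.sqrt 2 * |x|))

lemma c_pos : (0:ℝ) < Real.sqrt 2 := by positivity

lemma dens_nonneg (x : ℝ) : 0 ≤ dens x := by
  unfold dens; positivity

lemma dens_cont : Continuous dens :=
  continuous_const.mul ((Real.continuous_exp).comp ((continuous_const.mul continuous_abs).neg))

lemma intOn (m : ℕ) : IntegrableOn (fun t : ℝ => t ^ m * Real.exp (-(Real.sqrt 2 * t))) (Ioi 0) := by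
  apply integrable_of_isBigO_exp_neg (b := Real.sqrt 2 / 2) (by positivity)
  · exact ((continuous_pow m).mul ((Real.continuous_exp).comp
      ((continuous_const.mul continuous_id).neg))).continuousOn
  · have h := tendsto_rpow_mul_exp_neg_mul_atTop_nhds_zero (m : ℝ) (Real.sqrt 2 / 2) (by positivity)
    rw [Asymptotics.isBigO_iff]
    refine ⟨1, ?_⟩
    have h2 : ∀ᶠ x : ℝ in Filter.atTop,
        x ^ (m:ℝ) * Real.exp (-(Real.sqrt 2 / 2) * x) ≤ 1 :=
      h.eventually_le_const one_pos
    filter_upwards [h2, Filter.eventually_ge_atTop (0:ℝ)] with x hx hx0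
    have hxp : x ^ m = x ^ (m:ℝ) := (Real.rpow_natCast x m).symm
    have : |x ^ m * Real.exp (-(Real.sqrt 2 * x))| =
        x ^ m * Real.exp (-(Real.sqrt 2 * x)) := by
      rw [abs_of_nonneg]; positivity
    rw [Real.norm_eq_abs, Real.norm_eq_abs, this, abs_of_nonneg (Real.exp_pos _).le, one_mul]
    have : Real.exp (-(Real.sqrt 2 * x)) ≤ Real.exp (-(Real.sqrt 2/2) * x) * Real.exp (-(Real.sqrt 2/2) * x) := by
      rw [← Real.exp_add]; apply Real.exp_le_exp.mpr; nlinarith [c_pos]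
    calc x ^ m * Real.exp (-(Real.sqrt 2 * x))
        ≤ x ^ m * (Real.exp (-(Real.sqrt 2/2) * x) * Real.exp (-(Real.sqrt 2/2) * x)) := by
          apply mul_le_mul_of_nonneg_left this (by positivity)
      _ = (x ^ (m:ℝ) * Real.exp (-(Real.sqrt 2/2) * x)) * Real.exp (-(Real.sqrt 2/2) * x) := by
          rw [hxp]; ring
      _ ≤ 1 * Real.exp (-(Real.sqrt 2/2) * x) := by
          apply mul_le_mul_of_nonneg_right hx (Real.exp_pos _).le
      _ = Real.exp (-(Real.sqrt 2/2) * x) := one_mul _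

lemma valOn (m : ℕ) : ∫ t in Ioi (0:ℝ), t ^ m * Real.exp (-(Real.sqrt 2 * t))
    = (Nat.factorial m : ℝ) / (Real.sqrt 2) ^ (m + 1) := by
  have h := Real.integral_rpow_mul_exp_neg_mul_Ioi (a := (m:ℝ)+1) (r := Real.sqrt 2)
    (by positivity) c_pos
  rw [show ((m:ℝ)+1) - 1 = (m:ℝ) by ring] at h
  have he : ∫ t in Ioi (0:ℝ), t ^ (m:ℝ) * Real.exp (-(Real.sqrt 2 * t))
      = ∫ t in Ioi (0:ℝ), t ^ m * Real.exp (-(Real.sqrt 2 * t)) := by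
    refine setIntegral_congr_fun measurableSet_Ioi (fun t ht => ?_)
    rw [Real.rpow_natCast]
  rw [he] at h
  rw [h]
  have hg : Real.Gamma ((m:ℝ)+1) = (Nat.factorial m : ℝ) := by
    rw [show ((m:ℝ)+1) = ((m+1 : ℕ) : ℝ) by push_cast; ring]
    exact_mod_cast Real.Gamma_nat_eq_factorial m
  have hp : (1 / Real.sqrt 2) ^ ((m:ℝ)+1) = (1 / Real.sqrt 2) ^ (m+1 : ℕ) := by
    rw [show ((m:ℝ)+1) = ((m+1 : ℕ) : ℝ) by push_cast; ring, Real.rpow_natCast]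
  rw [hg, hp, div_pow, one_pow]
  field_simp


lemma integrable_comp_abs {f : ℝ → ℝ} (hf : IntegrableOn f (Ioi 0)) :
    Integrable (fun x => f |x|) := by
  have int_Ioi : IntegrableOn (fun x => f |x|) (Ioi 0) := by
    apply hf.congr_fun (fun x hx => ?_) measurableSet_Ioi
    rw [abs_of_pos hx]
  have int_Iic : IntegrableOn (fun x => f |x|) (Iic 0) := by
    rw [← Measure.map_neg_eq_self (volume : Measure ℝ)]
    have m : MeasurableEmbedding fun x : ℝ => -x := (Homeomorph.neg ℝ).measurableEmbedding
    rw [m.integrableOn_map_iff]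
    simp_rw [Function.comp_def, abs_neg, neg_preimage, neg_Iic, neg_zero]
    exact (integrableOn_Ici_iff_integrableOn_Ioi enorm_ne_top).mpr int_Ioi
  have h := int_Iic.union int_Ioi
  rwa [Iic_union_Ioi, integrableOn_univ] at h

lemma integrable_pow_mul_dens (m : ℕ) :
    Integrable (fun x : ℝ => |x| ^ m * dens x) := by
  have : (fun x : ℝ => |x| ^ m * dens x)
      = fun x => (fun t => t ^ m * ((Real.sqrt 2)⁻¹ * Real.exp (-(Real.sqrt 2 * t)))) |x| := by
    funext x; simp [dens]
  rw [this]
  refine integrable_comp_abs (f := fun t => t ^ m * ((Real.sqrt 2)⁻¹ * Real.exp (-(Real.sqrt 2 * t)))) ?_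
  have h2 := (intOn m).const_mul (Real.sqrt 2)⁻¹
  exact MeasureTheory.IntegrableOn.congr_fun h2 (fun t _ => by ring) measurableSet_Ioi

lemma integral_pow_mul_dens (m : ℕ) :
    ∫ x : ℝ, |x| ^ m * dens x = 2 * (Real.sqrt 2)⁻¹ * (Nat.factorial m : ℝ) / (Real.sqrt 2) ^ (m+1) := by
  have key : ∫ x : ℝ, |x| ^ m * dens x
      = 2 * ∫ t in Ioi (0:ℝ), t ^ m * ((Real.sqrt 2)⁻¹ * Real.exp (-(Real.sqrt 2 * t))) :=
    _root_.integral_comp_abs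
      (f := fun t => t ^ m * ((Real.sqrt 2)⁻¹ * Real.exp (-(Real.sqrt 2 * t))))
  rw [key]
  have h3 : ∫ t in Ioi (0:ℝ), t ^ m * ((Real.sqrt 2)⁻¹ * Real.exp (-(Real.sqrt 2 * t)))
      = (Real.sqrt 2)⁻¹ * ∫ t in Ioi (0:ℝ), t ^ m * Real.exp (-(Real.sqrt 2 * t)) := by
    rw [← integral_const_mul]
    congr 1; funext t; ring
  rw [h3, valOn]
  ring

lemma sq_sqrt2 : (Real.sqrt 2) ^ 2 = 2 := Real.sq_sqrt (by norm_num)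

lemma integral_dens : ∫ x : ℝ, dens x = 1 := by
  have h := integral_pow_mul_dens 0
  simp only [pow_zero, one_mul, Nat.factorial_zero, Nat.cast_one] at h
  rw [h]
  have h2 : Real.sqrt 2 * Real.sqrt 2 = 2 := Real.mul_self_sqrt (by norm_num)
  have hne : Real.sqrt 2 ≠ 0 := ne_of_gt c_pos
  field_simp
  rw [zero_add, pow_one, h2]

lemma integral_sq_dens : ∫ x : ℝ, x ^ 2 * dens x = 1 := by
  have h := integral_pow_mul_dens 2
  simp only [sq_abs] at h
  rw [h]
  have : (Real.sqrt 2 : ℝ) ^ (2+1) = 2 * Real.sqrt 2 := by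
    rw [pow_succ, sq_sqrt2]
  rw [this, show (Nat.factorial 2 : ℝ) = 2 by norm_num]
  have h2 : Real.sqrt 2 * Real.sqrt 2 = 2 := Real.mul_self_sqrt (by norm_num)
  have hne : Real.sqrt 2 ≠ 0 := ne_of_gt c_pos
  field_simp
  nlinarith [sq_sqrt2, h2]

lemma dens_meas : Measurable dens := dens_cont.measurable

lemma stdLaplace_eq : stdLaplace
    = volume.withDensity (fun x => ((dens x).toNNReal : ℝ≥0∞)) := rfl

instance : IsProbabilityMeasure stdLaplace := by
  constructor
  rw [stdLaplace]
  rw [withDensity_apply _ MeasurableSet.univ, Measure.restrict_univ]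
  have hint : Integrable dens := by
    have h0 := integrable_pow_mul_dens 0
    simpa using h0
  show (∫⁻ x : ℝ, ENNReal.ofReal (dens x) ∂volume) = 1
  rw [← MeasureTheory.ofReal_integral_eq_lintegral_ofReal hint
    (Filter.Eventually.of_forall dens_nonneg), integral_dens, ENNReal.ofReal_one]

lemma integral_stdLaplace (g : ℝ → ℝ) :
    ∫ x, g x ∂stdLaplace = ∫ x, dens x * g x := by
  rw [stdLaplace_eq, integral_withDensity_eq_integral_smul (dens_meas.real_toNNReal) g]
  congr 1; funext x
  rw [NNReal.smul_def, smul_eq_mul, Real.coe_toNNReal _ (dens_nonneg x)]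

lemma integrable_stdLaplace_iff (g : ℝ → ℝ) (hg : Measurable g) :
    Integrable g stdLaplace ↔ Integrable (fun x => g x * dens x) := by
  rw [stdLaplace]
  rw [show (fun x : ℝ => ENNReal.ofReal ((Real.sqrt 2)⁻¹ * Real.exp (-(Real.sqrt 2 * |x|))))
      = fun x => ENNReal.ofReal (dens x) from rfl]
  rw [integrable_withDensity_iff (dens_meas.ennreal_ofReal) (by
    apply Filter.Eventually.of_forall; intro x; exact ENNReal.ofReal_lt_top)]
  simp_rw [show ∀ x : ℝ, (ENNReal.ofReal (dens x)).toReal = dens x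
    from fun x => ENNReal.toReal_ofReal (dens_nonneg x)]

lemma integrable_id_stdLaplace : Integrable (fun x : ℝ => x) stdLaplace := by
  rw [integrable_stdLaplace_iff _ measurable_id']
  have h := integrable_pow_mul_dens 1
  apply h.mono' (by
    exact (measurable_id.mul dens_meas).aestronglyMeasurable)
  apply Filter.Eventually.of_forall; intro x
  rw [Real.norm_eq_abs, abs_mul, abs_of_nonneg (dens_nonneg x), pow_one]

lemma integrable_sq_stdLaplace : Integrable (fun x : ℝ => x ^ 2) stdLaplace := by
  rw [integrable_stdLaplace_iff _ (measurable_id'.pow_const 2)]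
  have h := integrable_pow_mul_dens 2
  simp only [sq_abs] at h
  exact h

lemma memLp_id_stdLaplace : MemLp (fun x : ℝ => x) 2 stdLaplace := by
  rw [memLp_two_iff_integrable_sq measurable_id'.aestronglyMeasurable]
  exact integrable_sq_stdLaplace

lemma integral_id_stdLaplace : ∫ x, x ∂stdLaplace = 0 := by
  rw [integral_stdLaplace]
  have hodd : ∀ x : ℝ, dens (-x) * (-x) = -(dens x * x) := by
    intro x; simp [dens, abs_neg]
  have m : MeasurableEmbedding fun x : ℝ => -x := (Homeomorph.neg ℝ).measurableEmbedding
  have hmap : ∫ x : ℝ, dens x * x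
      = ∫ x : ℝ, dens (-x) * (-x) := by
    conv_lhs => rw [← Measure.map_neg_eq_self (volume : Measure ℝ)]
    exact m.integral_map (g := fun x => dens x * x)
  have h : ∫ x : ℝ, dens x * x = - ∫ x : ℝ, dens x * x := by
    conv_lhs => rw [hmap]
    simp_rw [hodd]
    rw [integral_neg]
  linarith

lemma integral_sq_stdLaplace : ∫ x, x ^ 2 ∂stdLaplace = 1 := by
  rw [integral_stdLaplace]
  rw [← integral_sq_dens]
  congr 1; funext x; ring

end Lap

open scoped ENNReal NNReal in
open ProbabilityTheory in
/-- Summed Chebyshev bound over pairwise disjoint cells for the privatised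
empirical signed measures `ν̃_n(A_j) = (1/n) Σ_i (Y_i 1{X_i ∈ A_j} + σ_Z ε_{i,j})`:
`Σ_j P(|ν̃_n(A_j) − ν(A_j)| ≥ |ν(A_j)|)·|ν(A_j)| ≤ (1/√n) Σ_j √(σ_Z² + μ(A_j))
  ≤ (k/√n)·√(σ_Z² + 1/k)`. -/
theorem summed_chebyshev_private_cells_bound
    {𝒳 : Type*} [MeasurableSpace 𝒳]
    (lam : Measure (𝒳 × ℝ)) [IsProbabilityMeasure lam]
    (μ : Measure 𝒳) (hμ : μ = lam.map Prod.fst)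
    (hY : lam {p | p.2 = 1 ∨ p.2 = -1} = 1)
    {n k : ℕ} (hn : 0 < n) (hk : 0 < k)
    {Ω : Type*} [MeasurableSpace Ω] (P : Measure Ω) [IsProbabilityMeasure P]
    (Xdat : Fin n → Ω → 𝒳) (Ydat : Fin n → Ω → ℝ) (ε : Fin n × Fin k → Ω → ℝ)
    (hXmeas : ∀ i, Measurable (Xdat i)) (hYmeas : ∀ i, Measurable (Ydat i))
    (hεmeas : ∀ p, Measurable (ε p))
    (hlaw : ∀ i, P.map (fun ω => (Xdat i ω, Ydat i ω)) = lam)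
    (hεlaw : ∀ p, P.map (ε p) = stdLaplace)
    -- the sample pairs and all noise variables are jointly independent
    (hindep : ProbabilityTheory.iIndepFun
      (Sum.elim
        (fun i ω => (Sum.inl (Xdat i ω, Ydat i ω) : (𝒳 × ℝ) ⊕ ℝ))
        (fun p ω => Sum.inr (ε p ω))) P)
    (σZ : ℝ) (hσ : 0 < σZ)
    (A : Fin k → Set 𝒳) (hA : ∀ j, MeasurableSet (A j))
    (hdisj : ∀ j j' : Fin k, j ≠ j' → Disjoint (A j) (A j'))
    (ν : Fin k → ℝ) (hν_def : ∀ j, ν j = ∫ p in {q : 𝒳 × ℝ | q.1 ∈ A j}, p.2 ∂lam) :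
    (∑ j : Fin k,
      (P {ω | |(n : ℝ)⁻¹ * (∑ i,
            (Ydat i ω * (A j).indicator (fun _ => (1 : ℝ)) (Xdat i ω) + σZ * ε (i, j) ω))
          - ν j| ≥ |ν j|}).toReal * |ν j|)
      ≤ (1 / Real.sqrt n) * ∑ j : Fin k, Real.sqrt (σZ ^ 2 + (μ (A j)).toReal) ∧
    (1 / Real.sqrt n) * (∑ j : Fin k, Real.sqrt (σZ ^ 2 + (μ (A j)).toReal))
      ≤ ((k : ℝ) / Real.sqrt n) * Real.sqrt (σZ ^ 2 + 1 / k) := by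
  classical
  have hnR : (0:ℝ) < n := by exact_mod_cast hn
  have hkR : (0:ℝ) < k := by exact_mod_cast hk
  set Z : (Fin n ⊕ Fin n × Fin k) → Ω → ((𝒳 × ℝ) ⊕ ℝ) := Sum.elim
      (fun i ω => (Sum.inl (Xdat i ω, Ydat i ω) : (𝒳 × ℝ) ⊕ ℝ))
      (fun p ω => Sum.inr (ε p ω)) with hZdef
  have hpair_meas : ∀ i, Measurable (fun ω => (Xdat i ω, Ydat i ω)) :=
    fun i => (hXmeas i).prodMk (hYmeas i)
  have hZmeas : ∀ idx, Measurable (Z idx) := by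
    rintro (i | p)
    · exact measurable_inl.comp (hpair_meas i)
    · exact measurable_inr.comp (hεmeas p)
  have hμprob : IsProbabilityMeasure μ := by
    rw [hμ]; exact Measure.isProbabilityMeasure_map measurable_fst.aemeasurable
  have hμA : ∀ j, μ (A j) = lam {q : 𝒳 × ℝ | q.1 ∈ A j} := by
    intro j; rw [hμ, Measure.map_apply measurable_fst (hA j)]; rfl
  -- Laplace noise moments
  have hεmem : ∀ p, MemLp (ε p) 2 P := by
    intro p
    have h1 : MemLp (fun x : ℝ => x) 2 (P.map (ε p)) := by
      rw [hεlaw p]; exact Lap.memLp_id_stdLaplace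
    exact (memLp_map_measure_iff (measurable_id'.aestronglyMeasurable)
      (hεmeas p).aemeasurable).1 h1
  have hεint : ∀ p, ∫ ω, ε p ω ∂P = 0 := by
    intro p
    have h1 : ∫ ω, ε p ω ∂P = ∫ x, x ∂(P.map (ε p)) :=
      (integral_map (hεmeas p).aemeasurable measurable_id'.aestronglyMeasurable).symm
    rw [h1, hεlaw p, Lap.integral_id_stdLaplace]
  have hεsq : ∀ p, ∫ ω, (ε p ω) ^ 2 ∂P = 1 := by
    intro p
    have h1 : ∫ ω, (ε p ω) ^ 2 ∂P = ∫ x, x ^ 2 ∂(P.map (ε p)) :=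
      (integral_map (hεmeas p).aemeasurable
        (measurable_id'.pow_const 2).aestronglyMeasurable).symm
    rw [h1, hεlaw p, Lap.integral_sq_stdLaplace]
  have hεvar : ∀ p, variance (ε p) P = 1 := by
    intro p
    rw [variance_eq_sub (hεmem p)]
    simp only [Pi.pow_apply]
    rw [hεsq p]
    have h2 : P[ε p] = 0 := hεint p
    rw [h2]
    norm_num
  -- a.e. Y = ±1
  have hSmeas : MeasurableSet {p : 𝒳 × ℝ | p.2 = 1 ∨ p.2 = -1} := by
    show MeasurableSet ((Prod.snd ⁻¹' {1}) ∪ (Prod.snd ⁻¹' ({-1} : Set ℝ)) : Set (𝒳 × ℝ))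
    exact (measurable_snd (measurableSet_singleton 1)).union
      (measurable_snd (measurableSet_singleton (-1)))
  have hlamae : ∀ᵐ q ∂lam, q.2 = 1 ∨ q.2 = -1 := by
    have h0 : lam ({p : 𝒳 × ℝ | p.2 = 1 ∨ p.2 = -1}ᶜ) = 0 := by
      rw [measure_compl hSmeas (measure_ne_top _ _), hY, measure_univ]
      simp
    rw [ae_iff]
    convert h0 using 2
    rfl
  have hYae : ∀ i : Fin n, ∀ᵐ ω ∂P, Ydat i ω = 1 ∨ Ydat i ω = -1 := by
    intro i
    have h1 : P ((fun ω => (Xdat i ω, Ydat i ω)) ⁻¹' {p : 𝒳 × ℝ | p.2 = 1 ∨ p.2 = -1}) = 1 := by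
      rw [← Measure.map_apply (hpair_meas i) hSmeas, hlaw i, hY]
    have h0 : P (((fun ω => (Xdat i ω, Ydat i ω)) ⁻¹' {p : 𝒳 × ℝ | p.2 = 1 ∨ p.2 = -1})ᶜ) = 0 := by
      rw [measure_compl ((hpair_meas i) hSmeas) (measure_ne_top _ _), h1, measure_univ]
      simp
    rw [ae_iff]
    convert h0 using 2
    rfl
  -- main per-cell bound
  have key : ∀ j : Fin k,
      (P {ω | |(n : ℝ)⁻¹ * (∑ i,
            (Ydat i ω * (A j).indicator (fun _ => (1 : ℝ)) (Xdat i ω) + σZ * ε (i, j) ω))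
          - ν j| ≥ |ν j|}).toReal * |ν j|
      ≤ (1 / Real.sqrt n) * Real.sqrt (σZ ^ 2 + (μ (A j)).toReal) := by
    intro j
    have hSj : MeasurableSet {q : 𝒳 × ℝ | q.1 ∈ A j} := measurable_fst (hA j)
    set W : Fin n → Ω → ℝ :=
      fun i ω => Ydat i ω * (A j).indicator (fun _ => (1:ℝ)) (Xdat i ω) with hWdef
    set T : Fin n → Ω → ℝ := fun i ω => W i ω + σZ * ε (i, j) ω with hTdef
    have hind_meas : Measurable ((A j).indicator (fun _ => (1:ℝ))) :=
      measurable_const.indicator (hA j)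
    have hWmeas : ∀ i, Measurable (W i) :=
      fun i => (hYmeas i).mul (hind_meas.comp (hXmeas i))
    have hWbound : ∀ i, ∀ᵐ ω ∂P, ‖W i ω‖ ≤ 1 := by
      intro i
      filter_upwards [hYae i] with ω hω
      have h1 : |Ydat i ω| = 1 := by rcases hω with h | h <;> simp [h]
      have h2 : |(A j).indicator (fun _ => (1:ℝ)) (Xdat i ω)| ≤ 1 := by
        by_cases hm : Xdat i ω ∈ A j <;> simp [Set.indicator_apply, hm]
      calc ‖W i ω‖ = |Ydat i ω| * |(A j).indicator (fun _ => (1:ℝ)) (Xdat i ω)| := by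
            rw [Real.norm_eq_abs, abs_mul]
        _ ≤ 1 * 1 := by rw [h1]; exact mul_le_mul_of_nonneg_left h2 (by norm_num)
        _ = 1 := one_mul 1
    have hWmem : ∀ i, MemLp (W i) 2 P :=
      fun i => MemLp.of_bound (hWmeas i).aestronglyMeasurable 1 (hWbound i)
    have hφmeas : Measurable (fun q : 𝒳 × ℝ => q.2 * (A j).indicator (fun _ => (1:ℝ)) q.1) :=
      measurable_snd.mul (hind_meas.comp measurable_fst)
    have hWint : ∀ i, ∫ ω, W i ω ∂P = ν j := by
      intro i
      have h1 : ∫ ω, W i ω ∂P = ∫ q : 𝒳 × ℝ, q.2 * (A j).indicator (fun _ => (1:ℝ)) q.1 ∂lam := by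
        rw [← hlaw i]
        exact (integral_map (hpair_meas i).aemeasurable hφmeas.aestronglyMeasurable).symm
      rw [h1, hν_def j, ← integral_indicator hSj]
      refine integral_congr_ae (Filter.Eventually.of_forall fun q => ?_)
      by_cases hm : q.1 ∈ A j <;> simp [Set.indicator_apply, hm]
    have hWsq : ∀ i, ∫ ω, (W i ω) ^ 2 ∂P = (μ (A j)).toReal := by
      intro i
      have h1 : ∫ ω, (W i ω) ^ 2 ∂P
          = ∫ q : 𝒳 × ℝ, (q.2 * (A j).indicator (fun _ => (1:ℝ)) q.1) ^ 2 ∂lam := by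
        rw [← hlaw i]
        exact (integral_map (hpair_meas i).aemeasurable
          (hφmeas.pow_const 2).aestronglyMeasurable).symm
      have h2 : ∫ q : 𝒳 × ℝ, (q.2 * (A j).indicator (fun _ => (1:ℝ)) q.1) ^ 2 ∂lam
          = ∫ q : 𝒳 × ℝ, ({q : 𝒳 × ℝ | q.1 ∈ A j}).indicator (fun _ => (1:ℝ)) q ∂lam := by
        refine integral_congr_ae ?_
        filter_upwards [hlamae] with q hq
        have hq2 : q.2 ^ 2 = 1 := by rcases hq with h | h <;> rw [h] <;> norm_num
        by_cases hm : q.1 ∈ A j <;> simp [Set.indicator_apply, hm, mul_pow, hq2]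
      rw [h1, h2, integral_indicator_const (1:ℝ) hSj, hμA j, smul_eq_mul, mul_one]
      rfl
    have hWvar : ∀ i, variance (W i) P ≤ (μ (A j)).toReal := by
      intro i
      rw [variance_eq_sub (hWmem i)]
      simp only [Pi.pow_apply]
      rw [hWsq i]
      have h2 : (0:ℝ) ≤ (P[W i]) ^ 2 := sq_nonneg _
      linarith
    have hWEindep : ∀ i : Fin n, IndepFun (W i) (fun ω => σZ * ε (i, j) ω) P := by
      intro i
      have base : IndepFun (Z (Sum.inl i)) (Z (Sum.inr (i, j))) P :=
        hindep.indepFun (by simp)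
      exact base.comp
        (φ := Sum.elim (fun q : 𝒳 × ℝ => q.2 * (A j).indicator (fun _ => (1:ℝ)) q.1)
          (fun _ : ℝ => 0))
        (ψ := Sum.elim (fun _ : 𝒳 × ℝ => (0:ℝ)) (fun r => σZ * r))
        (hφmeas.sumElim measurable_const)
        (measurable_const.sumElim (measurable_id'.const_mul σZ))
    have hTmem : ∀ i, MemLp (T i) 2 P :=
      fun i => (hWmem i).add ((hεmem (i, j)).const_mul σZ)
    have hTindep : ∀ i i' : Fin n, i ≠ i' → IndepFun (T i) (T i') P := by
      intro i i' hne
      have base := hindep.indepFun_prodMk_prodMk hZmeas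
        (Sum.inl i) (Sum.inr (i, j)) (Sum.inl i') (Sum.inr (i', j))
        (by simp [hne]) (by simp) (by simp) (by simp [Prod.ext_iff, hne])
      exact base.comp
        (φ := fun q : ((𝒳 × ℝ) ⊕ ℝ) × ((𝒳 × ℝ) ⊕ ℝ) =>
          Sum.elim (fun q : 𝒳 × ℝ => q.2 * (A j).indicator (fun _ => (1:ℝ)) q.1)
            (fun _ : ℝ => 0) q.1
          + Sum.elim (fun _ : 𝒳 × ℝ => (0:ℝ)) (fun r => σZ * r) q.2)
        (ψ := fun q : ((𝒳 × ℝ) ⊕ ℝ) × ((𝒳 × ℝ) ⊕ ℝ) =>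
          Sum.elim (fun q : 𝒳 × ℝ => q.2 * (A j).indicator (fun _ => (1:ℝ)) q.1)
            (fun _ : ℝ => 0) q.1
          + Sum.elim (fun _ : 𝒳 × ℝ => (0:ℝ)) (fun r => σZ * r) q.2)
        (((hφmeas.sumElim measurable_const).comp measurable_fst).add
          ((measurable_const.sumElim (measurable_id'.const_mul σZ)).comp measurable_snd))
        (((hφmeas.sumElim measurable_const).comp measurable_fst).add
          ((measurable_const.sumElim (measurable_id'.const_mul σZ)).comp measurable_snd))
    have hTvar : ∀ i, variance (T i) P ≤ (μ (A j)).toReal + σZ ^ 2 := by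
      intro i
      have hadd : T i = W i + fun ω => σZ * ε (i, j) ω := rfl
      have hvadd : variance (T i) P
          = variance (W i) P + variance (fun ω => σZ * ε (i, j) ω) P := by
        rw [hadd]
        exact (hWEindep i).variance_add (hWmem i) ((hεmem (i, j)).const_mul σZ)
      rw [hvadd, variance_const_mul, hεvar (i, j), mul_one]
      have := hWvar i
      linarith
    have hTint : ∀ i, ∫ ω, T i ω ∂P = ν j := by
      intro i
      have h1 : ∫ ω, T i ω ∂P
          = (∫ ω, W i ω ∂P) + ∫ ω, σZ * ε (i, j) ω ∂P :=
        integral_add ((hWmem i).integrable one_le_two)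
          (((hεmem (i, j)).integrable one_le_two).const_mul σZ)
      rw [h1, integral_const_mul, hεint (i, j), hWint i]
      ring
    set S : Ω → ℝ := fun ω => ∑ i, T i ω with hSdef
    have heq : (∑ i, T i) = S := by
      funext ω; simp [hSdef, Finset.sum_apply]
    have hSmem : MemLp S 2 P := by
      rw [← heq]; exact memLp_finset_sum' Finset.univ (fun i _ => hTmem i)
    have hSvar : variance S P ≤ n * ((μ (A j)).toReal + σZ ^ 2) := by
      rw [← heq, IndepFun.variance_sum (fun i _ => hTmem i)
        (fun i _ i' _ hne => hTindep i i' hne)]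
      calc ∑ i : Fin n, variance (T i) P
          ≤ ∑ _i : Fin n, ((μ (A j)).toReal + σZ ^ 2) :=
            Finset.sum_le_sum (fun i _ => hTvar i)
        _ = n * ((μ (A j)).toReal + σZ ^ 2) := by
            simp [Finset.sum_const, Finset.card_univ, nsmul_eq_mul]
            ring
    have hSint : ∫ ω, S ω ∂P = n * ν j := by
      have h1 : ∫ ω, S ω ∂P = ∑ i : Fin n, ∫ ω, T i ω ∂P :=
        integral_finset_sum _ (fun i _ => (hTmem i).integrable one_le_two)
      rw [h1]
      simp [hTint, Finset.sum_const, Finset.card_univ, nsmul_eq_mul]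
    set Xv : Ω → ℝ := fun ω => (n:ℝ)⁻¹ * S ω with hXvdef
    have hXvmem : MemLp Xv 2 P := hSmem.const_mul _
    have hXvint : P[Xv] = ν j := by
      show ∫ ω, (n:ℝ)⁻¹ * S ω ∂P = ν j
      rw [integral_const_mul, hSint]
      field_simp
    have hXvvar : variance Xv P ≤ (σZ ^ 2 + (μ (A j)).toReal) / n := by
      have h1 : variance Xv P = (n:ℝ)⁻¹ ^ 2 * variance S P := variance_const_mul _ _ _
      rw [h1]
      calc (n:ℝ)⁻¹ ^ 2 * variance S P
          ≤ (n:ℝ)⁻¹ ^ 2 * (n * ((μ (A j)).toReal + σZ ^ 2)) :=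
            mul_le_mul_of_nonneg_left hSvar (by positivity)
        _ = (σZ ^ 2 + (μ (A j)).toReal) / n := by
            field_simp
            ring
    -- Chebyshev and conclusion
    set VarUB : ℝ := (σZ ^ 2 + (μ (A j)).toReal) / n with hVdef
    have hVpos : 0 < VarUB := by
      apply div_pos _ hnR
      have : (0:ℝ) ≤ (μ (A j)).toReal := ENNReal.toReal_nonneg
      nlinarith
    have hsqrtV : Real.sqrt VarUB
        = (1 / Real.sqrt n) * Real.sqrt (σZ ^ 2 + (μ (A j)).toReal) := by
      rw [hVdef, Real.sqrt_div (by positivity) _]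
      rw [one_div, div_eq_inv_mul]
    rw [← hsqrtV]
    rcases eq_or_ne (ν j) 0 with h0 | h0
    · rw [h0]
      simp only [abs_zero, mul_zero]
      exact Real.sqrt_nonneg _
    have hc : 0 < |ν j| := abs_pos.mpr h0
    have hsetEq : {ω | |(n : ℝ)⁻¹ * (∑ i,
            (Ydat i ω * (A j).indicator (fun _ => (1 : ℝ)) (Xdat i ω) + σZ * ε (i, j) ω))
          - ν j| ≥ |ν j|}
        = {ω | |ν j| ≤ |Xv ω - P[Xv]|} := by
      rw [hXvint]
    have cheb := ProbabilityTheory.meas_ge_le_variance_div_sq hXvmem hc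
    have hprV : (P {ω | |ν j| ≤ |Xv ω - P[Xv]|}).toReal ≤ variance Xv P / |ν j| ^ 2 := by
      calc (P {ω | |ν j| ≤ |Xv ω - P[Xv]|}).toReal
          ≤ (ENNReal.ofReal (variance Xv P / |ν j| ^ 2)).toReal :=
            ENNReal.toReal_mono ENNReal.ofReal_ne_top cheb
        _ ≤ variance Xv P / |ν j| ^ 2 := by
            rw [ENNReal.toReal_ofReal (div_nonneg (variance_nonneg _ _) (sq_nonneg _))]
    have hpr1 : (P {ω | |ν j| ≤ |Xv ω - P[Xv]|}).toReal ≤ 1 := by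
      have h2 : P {ω | |ν j| ≤ |Xv ω - P[Xv]|} ≤ 1 := prob_le_one
      calc (P {ω | |ν j| ≤ |Xv ω - P[Xv]|}).toReal
          ≤ (1 : ℝ≥0∞).toReal := ENNReal.toReal_mono ENNReal.one_ne_top h2
        _ = 1 := by simp
    rw [hsetEq]
    rcases le_or_gt |ν j| (Real.sqrt VarUB) with hle | hlt
    · calc (P {ω | |ν j| ≤ |Xv ω - P[Xv]|}).toReal * |ν j|
          ≤ 1 * |ν j| := mul_le_mul_of_nonneg_right hpr1 hc.le
        _ = |ν j| := one_mul _
        _ ≤ Real.sqrt VarUB := hle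
    · have hvXnn : 0 ≤ variance Xv P := variance_nonneg _ _
      calc (P {ω | |ν j| ≤ |Xv ω - P[Xv]|}).toReal * |ν j|
          ≤ (variance Xv P / |ν j| ^ 2) * |ν j| :=
            mul_le_mul_of_nonneg_right hprV hc.le
        _ = variance Xv P / |ν j| := by
            field_simp
        _ ≤ VarUB / |ν j| := (div_le_div_iff_of_pos_right hc).mpr hXvvar
        _ ≤ VarUB / Real.sqrt VarUB :=
            div_le_div_of_nonneg_left hVpos.le (Real.sqrt_pos.mpr hVpos) hlt.le
        _ = Real.sqrt VarUB := Real.div_sqrt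
  constructor
  · calc (∑ j : Fin k,
        (P {ω | |(n : ℝ)⁻¹ * (∑ i,
              (Ydat i ω * (A j).indicator (fun _ => (1 : ℝ)) (Xdat i ω) + σZ * ε (i, j) ω))
            - ν j| ≥ |ν j|}).toReal * |ν j|)
        ≤ ∑ j : Fin k, (1 / Real.sqrt n) * Real.sqrt (σZ ^ 2 + (μ (A j)).toReal) :=
          Finset.sum_le_sum (fun j _ => key j)
      _ = (1 / Real.sqrt n) * ∑ j : Fin k, Real.sqrt (σZ ^ 2 + (μ (A j)).toReal) := by
          rw [Finset.mul_sum]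
  · -- second inequality
    have hsum1 : ∑ j : Fin k, (μ (A j)).toReal ≤ 1 := by
      have hUnion : μ (⋃ j ∈ (Finset.univ : Finset (Fin k)), A j)
          = ∑ j : Fin k, μ (A j) := by
        refine measure_biUnion_finset ?_ (fun j _ => hA j)
        intro j _ j' _ hne
        exact hdisj j j' hne
      have h2 : ∑ j : Fin k, μ (A j) ≤ 1 := by
        rw [← hUnion]; exact prob_le_one
      have h3 : (∑ j : Fin k, μ (A j)).toReal = ∑ j : Fin k, (μ (A j)).toReal :=
        ENNReal.toReal_sum (fun j _ => measure_ne_top _ _)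
      calc ∑ j : Fin k, (μ (A j)).toReal = (∑ j : Fin k, μ (A j)).toReal := h3.symm
        _ ≤ (1 : ℝ≥0∞).toReal := ENNReal.toReal_mono ENNReal.one_ne_top h2
        _ = 1 := by simp
    have hCS : (∑ j : Fin k, Real.sqrt (σZ ^ 2 + (μ (A j)).toReal)) ^ 2
        ≤ (k : ℝ) * ∑ j : Fin k, (σZ ^ 2 + (μ (A j)).toReal) := by
      have h := Finset.sum_mul_sq_le_sq_mul_sq Finset.univ (fun _ : Fin k => (1:ℝ))
        (fun j => Real.sqrt (σZ ^ 2 + (μ (A j)).toReal))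
      simp only [one_mul, one_pow] at h
      calc (∑ j : Fin k, Real.sqrt (σZ ^ 2 + (μ (A j)).toReal)) ^ 2
          ≤ (∑ _j : Fin k, (1:ℝ)) * ∑ j : Fin k, Real.sqrt (σZ ^ 2 + (μ (A j)).toReal) ^ 2 := h
        _ = (k : ℝ) * ∑ j : Fin k, (σZ ^ 2 + (μ (A j)).toReal) := by
            congr 1
            · simp
            · refine Finset.sum_congr rfl (fun j _ => ?_)
              rw [Real.sq_sqrt (by positivity)]
    have hsum2 : ∑ j : Fin k, (σZ ^ 2 + (μ (A j)).toReal) ≤ k * σZ ^ 2 + 1 := by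
      rw [Finset.sum_add_distrib]
      have h1 : ∑ _j : Fin k, σZ ^ 2 = (k : ℝ) * σZ ^ 2 := by
        simp [Finset.sum_const, Finset.card_univ, nsmul_eq_mul]
      rw [h1]
      linarith [hsum1]
    have hfinal : ∑ j : Fin k, Real.sqrt (σZ ^ 2 + (μ (A j)).toReal)
        ≤ (k : ℝ) * Real.sqrt (σZ ^ 2 + 1 / k) := by
      have hnn : 0 ≤ ∑ j : Fin k, Real.sqrt (σZ ^ 2 + (μ (A j)).toReal) :=
        Finset.sum_nonneg (fun j _ => Real.sqrt_nonneg _)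
      have h2 : (∑ j : Fin k, Real.sqrt (σZ ^ 2 + (μ (A j)).toReal)) ^ 2
          ≤ ((k : ℝ) * Real.sqrt (σZ ^ 2 + 1 / k)) ^ 2 := by
        have h3 : ((k : ℝ) * Real.sqrt (σZ ^ 2 + 1 / k)) ^ 2
            = (k : ℝ) ^ 2 * (σZ ^ 2 + 1 / k) := by
          rw [mul_pow, Real.sq_sqrt (by positivity)]
        rw [h3]
        have h4 : (k : ℝ) * ∑ j : Fin k, (σZ ^ 2 + (μ (A j)).toReal)
            ≤ (k : ℝ) ^ 2 * (σZ ^ 2 + 1 / k) := by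
          have h5 : (k : ℝ) ^ 2 * (σZ ^ 2 + 1 / k) = (k:ℝ) * ((k:ℝ) * σZ ^ 2 + 1) := by
            field_simp
          rw [h5]
          exact mul_le_mul_of_nonneg_left hsum2 hkR.le
        exact le_trans hCS h4
      have h6 : 0 ≤ (k : ℝ) * Real.sqrt (σZ ^ 2 + 1 / k) := by positivity
      nlinarith [h2, hnn, h6]
    calc (1 / Real.sqrt n) * (∑ j : Fin k, Real.sqrt (σZ ^ 2 + (μ (A j)).toReal))
        ≤ (1 / Real.sqrt n) * ((k : ℝ) * Real.sqrt (σZ ^ 2 + 1 / k)) := by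
          apply mul_le_mul_of_nonneg_left hfinal (by positivity)
      _ = ((k : ℝ) / Real.sqrt n) * Real.sqrt (σZ ^ 2 + 1 / k) := by ring
end
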